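/- arXiv:2604.08071 — 4 statements merged into one kernel-verified Lean document; each statement's English description precedes it below -/
import Mathlib

section
/- Let G be a bidirected graph and let {uα, vβ} be a pair of vertex-sides. Then {uα, vβ} is a snarl of G if and only if there is a sign-cut graph F of G such that {uα, vβ} is a snarl of F. -/
/-!
Bidirected graphs.  A vertex-side is a vertex with a sign (`true` = `+`, `false` = `−`);
a bidirected edge is an unordered pair of vertex-sides (an element of `Sym2 (V × Bool)`).
-/

namespace Paper

variable {V : Type}

/-- A vertex-side: a vertex together with a sign (`true` = `+`, `false` = `−`). -/
abbrev Side (V : Type) := V × Bool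

/-- A bidirected graph on the vertex type `V`: a vertex set together with a set of
bidirected edges, each an unordered pair of vertex-sides with endpoints in `verts`. -/
structure BDGraph (V : Type) where
  verts : Set V
  E : Set (Sym2 (Side V))
  wf : ∀ e ∈ E, ∀ x ∈ e, Prod.fst x ∈ verts

namespace BDGraph

/-- `(u, α)` is a vertex-side of `G`, i.e. some edge of `G` is incident to `u`
with sign `α`. -/
def HasSide (G : BDGraph V) (u : V) (α : Bool) : Prop :=
  ∃ e ∈ G.E, (u, α) ∈ e

/-- Adjacency in the underlying undirected graph `U(G)` (signs ignored). -/
def uadj (G : BDGraph V) (a b : V) : Prop :=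
  ∃ e ∈ G.E, ∃ σ τ : Bool, e = s((a, σ), (b, τ))

/-- Connectivity (reachability) in the underlying undirected graph `U(G)`. -/
def uReach (G : BDGraph V) (a b : V) : Prop :=
  Relation.ReflTransGen G.uadj a b

/-- `v` is a tip of `G`: no two edges of `G` are incident to `v` with different signs. -/
def IsTip (G : BDGraph V) (v : V) : Prop :=
  ∀ e ∈ G.E, ∀ f ∈ G.E, ∀ σ : Bool, (v, σ) ∈ e → (v, !σ) ∈ f → False

/-- `v` is a tip of `G` with sign `α`: every edge of `G` incident to `v` carries the
sign `α` at `v`. -/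
def IsTipWith (G : BDGraph V) (v : V) (α : Bool) : Prop :=
  ∀ e ∈ G.E, ∀ σ : Bool, (v, σ) ∈ e → σ = α

/-- Deletion of the vertex `x` (and all edges incident to it). -/
def deleteVert (G : BDGraph V) (x : V) : BDGraph V where
  verts := G.verts \ {x}
  E := {e | e ∈ G.E ∧ ∀ y : Side V, y ∈ e → y.1 ≠ x}
  wf := by
    rintro e ⟨he, hne⟩ y hy
    exact ⟨G.wf e he y hy, hne y hy⟩

/-- Deletion of a single edge. -/
def deleteEdge (G : BDGraph V) (e₀ : Sym2 (Side V)) : BDGraph V where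
  verts := G.verts
  E := G.E \ {e₀}
  wf := by
    rintro e ⟨he, -⟩ y hy
    exact G.wf e he y hy

/-- `x` is a cutvertex of (the underlying undirected graph of) `G`: some two other
vertices are connected in `G` but no longer connected after deleting `x`. -/
def IsCutvertex (G : BDGraph V) (x : V) : Prop :=
  x ∈ G.verts ∧ ∃ a ∈ G.verts, ∃ b ∈ G.verts, a ≠ x ∧ b ≠ x ∧
    G.uReach a b ∧ ¬ (G.deleteVert x).uReach a b

/-- `G` is connected (underlying undirected graph, nonempty). -/
def Conn (G : BDGraph V) : Prop :=
  G.verts.Nonempty ∧ ∀ a ∈ G.verts, ∀ b ∈ G.verts, G.uReach a b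

/-- `H` is a subgraph of `G`. -/
def IsSubgraphOf (H G : BDGraph V) : Prop :=
  H.verts ⊆ G.verts ∧ H.E ⊆ G.E

end BDGraph

/-! ### Splitting a pair of vertex-sides

Splitting the vertex-side `u α` detaches all edges incident to `u` with the opposite
sign `!α` and reattaches them to a new vertex `u'`.  We split the two vertex-sides
`u α` and `v β` (`u ≠ v`) simultaneously, realising the two new vertices as `Sum.inr u`
and `Sum.inr v` in the vertex type `V ⊕ V` (original vertices are `Sum.inl`). -/

open Classical in
/-- Where each vertex-side goes under the splitting of `u α` and `v β`. -/
noncomputable def splitMap (u : V) (α : Bool) (v : V) (β : Bool) :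
    Side V → Side (V ⊕ V) :=
  fun x =>
    if x = (u, !α) then (Sum.inr u, !α)
    else if x = (v, !β) then (Sum.inr v, !β)
    else (Sum.inl x.1, x.2)

/-- The graph obtained from `G` by splitting the vertex-sides `u α` and `v β`. -/
noncomputable def BDGraph.split2 (G : BDGraph V) (u : V) (α : Bool) (v : V) (β : Bool) :
    BDGraph (V ⊕ V) where
  verts := (Sum.inl '' G.verts) ∪ {Sum.inr u, Sum.inr v}
  E := Sym2.map (splitMap u α v β) '' G.E
  wf := by
    rintro e ⟨f, hf, rfl⟩ x hx
    rw [Sym2.mem_map] at hx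
    obtain ⟨y, hy, rfl⟩ := hx
    by_cases h1 : y = (u, !α)
    · simp only [splitMap, if_pos h1]
      simp
    · by_cases h2 : y = (v, !β)
      · simp only [splitMap, if_neg h1, if_pos h2]
        simp
      · simp only [splitMap, if_neg h1, if_neg h2]
        exact Set.mem_union_left _ ⟨y.1, G.wf f hf y hy, rfl⟩

/-- The pair of vertex-sides `{u α, v β}` is separable in `G`: after splitting `u α`
and `v β`, there is a connected component containing `u` and `v` but neither of the
two new vertices `u'`, `v'`. -/
noncomputable def Separable (G : BDGraph V) (u : V) (α : Bool) (v : V) (β : Bool) : Prop :=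
  u ≠ v ∧
    (G.split2 u α v β).uReach (Sum.inl u) (Sum.inl v) ∧
    ¬ (G.split2 u α v β).uReach (Sum.inl u) (Sum.inr u) ∧
    ¬ (G.split2 u α v β).uReach (Sum.inl u) (Sum.inr v) ∧
    ¬ (G.split2 u α v β).uReach (Sum.inl v) (Sum.inr u) ∧
    ¬ (G.split2 u α v β).uReach (Sum.inl v) (Sum.inr v)

/-- The vertex set of the snarl component of `{u α, v β}`: the vertices of `G` lying in
the connected component of `u` after splitting `u α` and `v β`. -/
noncomputable def SnarlVerts (G : BDGraph V) (u : V) (α : Bool) (v : V) (β : Bool) :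
    Set V :=
  {w | (G.split2 u α v β).uReach (Sum.inl u) (Sum.inl w)}

/-- The edge set of the snarl component of `{u α, v β}`: the edges of `G` lying (after
splitting) in the connected component of `u`. -/
noncomputable def SnarlEdges (G : BDGraph V) (u : V) (α : Bool) (v : V) (β : Bool) :
    Set (Sym2 (Side V)) :=
  {e | e ∈ G.E ∧ ∀ y : Side V, y ∈ e →
      (G.split2 u α v β).uReach (Sum.inl u) (splitMap u α v β y).1}

/-- `{u α, v β}` is a snarl of `G`: separable, and minimal in the sense that the snarl
component `X` contains no vertex `w ∉ {u,v}` with vertex-sides `w γ`, `w !γ` such that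
`{u α, w γ}` and `{w !γ, v β}` are both separable in `G`. -/
noncomputable def IsSnarl (G : BDGraph V) (u : V) (α : Bool) (v : V) (β : Bool) : Prop :=
  Separable G u α v β ∧
    ¬ ∃ w ∈ SnarlVerts G u α v β, w ≠ u ∧ w ≠ v ∧
        ∃ γ : Bool, Separable G u α w γ ∧ Separable G w (!γ) v β

/-! ### Sign-consistent cutvertices and sign-cut graphs -/

/-- A cutvertex `x` of `G` is sign-consistent if `x` is a tip in `G[V(C) ∪ {x}]` for
every connected component `C` of `G − x` (components are described by a member `a`). -/
def BDGraph.SignConsistent (G : BDGraph V) (x : V) : Prop :=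
  G.IsCutvertex x ∧
    ∀ a ∈ (G.deleteVert x).verts,
      ∀ e ∈ G.E, ∀ f ∈ G.E,
        (∀ y : Side V, y ∈ e → y.1 = x ∨ (G.deleteVert x).uReach a y.1) →
        (∀ y : Side V, y ∈ f → y.1 = x ∨ (G.deleteVert x).uReach a y.1) →
        ∀ σ τ : Bool, (x, σ) ∈ e → (x, τ) ∈ f → σ = τ

open Classical in
/-- After splitting every sign-consistent vertex of `G` and relabelling, the two copies
of a sign-consistent vertex `x` are identified with the pairs `(x, true)`, `(x, false)`;
any other vertex `w` is identified with `(w, true)`.  `scKey G` sends a vertex-side to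
the copy of its vertex that it is attached to. -/
noncomputable def scKey (G : BDGraph V) : Side V → Side V :=
  fun x => if G.SignConsistent x.1 then x else (x.1, true)

lemma scKey_fst (G : BDGraph V) (y : Side V) : (scKey G y).1 = y.1 := by
  unfold scKey
  split <;> rfl

lemma scKey_idem (G : BDGraph V) (y : Side V) : scKey G (scKey G y) = scKey G y := by
  by_cases h : G.SignConsistent y.1
  · simp [scKey, h]
  · simp [scKey, h]

/-- The graph obtained from `G` by simultaneously splitting all sign-consistent
vertices (on the vertex type `V × Bool`, cf. `scKey`). -/
noncomputable def BDGraph.splitAll (G : BDGraph V) : BDGraph (Side V) where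
  verts := {p : Side V | p.1 ∈ G.verts ∧ scKey G p = p}
  E := Sym2.map (fun y : Side V => (scKey G y, y.2)) '' G.E
  wf := by
    rintro e ⟨f, hf, rfl⟩ x hx
    rw [Sym2.mem_map] at hx
    obtain ⟨y, hy, rfl⟩ := hx
    show (scKey G y).1 ∈ G.verts ∧ scKey G (scKey G y) = scKey G y
    exact ⟨by rw [scKey_fst]; exact G.wf f hf y hy, scKey_idem G y⟩

/-- `F` is a sign-cut graph of `G`: one of the graphs obtained by splitting every
sign-consistent vertex of `G` and relabelling each new vertex `y'` back to `y`;
concretely, the subgraph of `G` corresponding to a connected component of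
`G.splitAll`. -/
noncomputable def IsSignCutGraph (G F : BDGraph V) : Prop :=
  ∃ p ∈ G.splitAll.verts,
    F.verts = {w : V | ∃ σ : Bool, (w, σ) ∈ G.splitAll.verts ∧
                  G.splitAll.uReach p (w, σ)} ∧
    F.E = {e | e ∈ G.E ∧ ∀ y : Side V, y ∈ e → G.splitAll.uReach p (scKey G y)}

/-! ### Blocks -/

/-- `H` is a block of `G`: a maximal connected subgraph of `G` without a cutvertex. -/
def IsBlock (G H : BDGraph V) : Prop :=
  H.IsSubgraphOf G ∧ H.Conn ∧ (∀ x, ¬ H.IsCutvertex x) ∧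
    ∀ H' : BDGraph V, H'.IsSubgraphOf G → H.IsSubgraphOf H' → H'.Conn →
      (∀ x, ¬ H'.IsCutvertex x) → H'.verts = H.verts ∧ H'.E = H.E

/-- `H'` is a dangling block of `v` with respect to the block `H`:
a block of `G` different from `H` containing `v` with vertex-sides of opposite
signs at `v`. -/
def IsDanglingBlock (G H : BDGraph V) (v : V) (H' : BDGraph V) : Prop :=
  IsBlock G H' ∧ ¬ (H'.verts = H.verts ∧ H'.E = H.E) ∧ v ∈ H'.verts ∧
    H'.HasSide v true ∧ H'.HasSide v false

/-- `{u,v}` is a separation pair of `H`: some two other vertices of `H` are connected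
in `H` but no longer connected after removing `u` and `v`. -/
def IsSepPairB (H : BDGraph V) (u v : V) : Prop :=
  ∃ a ∈ H.verts, ∃ b ∈ H.verts, a ≠ u ∧ a ≠ v ∧ b ≠ u ∧ b ≠ v ∧
    H.uReach a b ∧ ¬ ((H.deleteVert u).deleteVert v).uReach a b

/-- `{u,v}` is a split pair of `H`: a separation pair of `H` or an edge of `H`. -/
def IsSplitPairB (H : BDGraph V) (u v : V) : Prop :=
  IsSepPairB H u v ∨ ∃ e ∈ H.E, ∃ σ τ : Bool, e = s((u, σ), (v, τ))

/-! ### Bidirected walks, paths and cycloids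

A bidirected walk `{v₁ α₁, v₂ α̂₂}, {v₂ α₂, v₃ α̂₃}, …` is encoded by the list
`[(v₁, α₁), (v₂, α₂), …]` of its *departing* sides: the first entry `(v₁, α₁)` is the
side of `v₁` on the first edge, and for `i ≥ 2` the walk arrives at `vᵢ` with sign
`!αᵢ` and departs with sign `αᵢ` (so the sign alternates at every internal vertex). -/

/-- One step of a bidirected walk, between consecutive departing sides. -/
def BStep (G : BDGraph V) (x y : Side V) : Prop :=
  s(x, (y.1, !y.2)) ∈ G.E

/-- `p` encodes a bidirected walk of `G` (at least one edge). -/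
def IsBWalk (G : BDGraph V) (p : List (Side V)) : Prop :=
  2 ≤ p.length ∧ p.Chain' (BStep G)

/-- `p` encodes a `u α`-`v β` bidirected path of `G`: a bidirected walk without
repeated vertices which starts at `u` with sign `α` and arrives at `v` with sign `β`
(so the last departing side recorded is `(v, !β)`). -/
def IsBPath (G : BDGraph V) (p : List (Side V)) (u : V) (α : Bool) (v : V) (β : Bool) :
    Prop :=
  IsBWalk G p ∧ p.head? = some (u, α) ∧ p.getLast? = some (v, !β) ∧
    (p.map Prod.fst).Nodup

/-- `G` has a cycloid: a closed bidirected walk through pairwise distinct vertices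
whose sign alternates at every vertex, except possibly at one (exceptional) vertex,
which we may take to be the starting vertex.  The closing edge either alternates at
the start vertex (`s(y, (x.1, !x.2))`) or fails to alternate there (`s(y, x)`). -/
def HasCycloid (G : BDGraph V) : Prop :=
  ∃ p : List (Side V), p ≠ [] ∧ (p.map Prod.fst).Nodup ∧ p.Chain' (BStep G) ∧
    ∃ x y : Side V, p.head? = some x ∧ p.getLast? = some y ∧
      (s(y, (x.1, !x.2)) ∈ G.E ∨ s(y, x) ∈ G.E)

/-- `G` has a cycloid with an exceptional vertex: exactly one vertex (the starting
one, after rotation) fails sign alternation. -/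
def HasExceptionalCycloid (G : BDGraph V) : Prop :=
  ∃ p : List (Side V), p ≠ [] ∧ (p.map Prod.fst).Nodup ∧ p.Chain' (BStep G) ∧
    ∃ x y : Side V, p.head? = some x ∧ p.getLast? = some y ∧ s(y, x) ∈ G.E

/-! ### Flipping a vertex -/

open Classical in
/-- Flip the sign of every vertex-side of `u`. -/
noncomputable def flipSide (u : V) : Side V → Side V :=
  fun x => if x.1 = u then (x.1, !x.2) else x

/-- The graph obtained from `G` by flipping the vertex `u` (every positive vertex-side
of `u` becomes negative and vice versa). -/
noncomputable def BDGraph.flip (G : BDGraph V) (u : V) : BDGraph V where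
  verts := G.verts
  E := Sym2.map (flipSide u) '' G.E
  wf := by
    rintro e ⟨f, hf, rfl⟩ x hx
    rw [Sym2.mem_map] at hx
    obtain ⟨y, hy, rfl⟩ := hx
    have h1 : (flipSide u y).1 = y.1 := by
      unfold flipSide
      split <;> rfl
    rw [h1]
    exact G.wf f hf y hy



/-! ### Auxiliary infrastructure for the proof of Statement 11 -/

section Infra

open Relation

/-- Adjacency determined by a set of bidirected edges alone. -/
def myadj {W : Type} (E : Set (Sym2 (W × Bool))) (a b : W) : Prop :=
  ∃ e ∈ E, ∃ σ τ : Bool, e = s((a, σ), (b, τ))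

/-- Reachability determined by a set of bidirected edges alone. -/
def myreach {W : Type} (E : Set (Sym2 (W × Bool))) (a b : W) : Prop :=
  Relation.ReflTransGen (myadj E) a b

lemma uadj_eq_myadj (G : BDGraph V) : G.uadj = myadj G.E := rfl

lemma uReach_eq_myreach (G : BDGraph V) : G.uReach = myreach G.E := rfl

lemma myadj_symm {W : Type} (E : Set (Sym2 (W × Bool))) : Symmetric (myadj E) := by
  rintro a b ⟨e, he, σ, τ, rfl⟩
  exact ⟨s((a,σ),(b,τ)), he, τ, σ, Sym2.eq_swap⟩

lemma myreach_refl {W : Type} (E : Set (Sym2 (W × Bool))) (a : W) : myreach E a a :=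
  ReflTransGen.refl

lemma myreach_symm {W : Type} {E : Set (Sym2 (W × Bool))} {a b : W}
    (h : myreach E a b) : myreach E b a := by
  induction h with
  | refl => exact ReflTransGen.refl
  | tail _ h2 ih => exact ReflTransGen.head (myadj_symm E h2) ih

lemma myreach_trans {W : Type} {E : Set (Sym2 (W × Bool))} {a b c : W}
    (h1 : myreach E a b) (h2 : myreach E b c) : myreach E a c :=
  ReflTransGen.trans h1 h2

lemma myadj_mono {W : Type} {E E' : Set (Sym2 (W × Bool))} (h : E ⊆ E') {a b : W}
    (ha : myadj E a b) : myadj E' a b := by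
  obtain ⟨e, he, σ, τ, rfl⟩ := ha
  exact ⟨_, h he, σ, τ, rfl⟩

lemma myreach_mono {W : Type} {E E' : Set (Sym2 (W × Bool))} (h : E ⊆ E') {a b : W}
    (ha : myreach E a b) : myreach E' a b :=
  ReflTransGen.mono (fun _ _ => myadj_mono h) a b ha

/-- Edges avoiding a set of vertices. -/
def sdel {W : Type} (E : Set (Sym2 (W × Bool))) (A : Set W) : Set (Sym2 (W × Bool)) :=
  {e ∈ E | ∀ y ∈ e, y.1 ∉ A}

/-- Edges avoiding two given vertex-sides. -/
def sav {W : Type} (E : Set (Sym2 (W × Bool))) (s₁ s₂ : W × Bool) : Set (Sym2 (W × Bool)) :=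
  {e ∈ E | s₁ ∉ e ∧ s₂ ∉ e}

lemma sdel_subset {W : Type} (E : Set (Sym2 (W × Bool))) (A : Set W) : sdel E A ⊆ E :=
  fun _ he => he.1

lemma sav_subset {W : Type} (E : Set (Sym2 (W × Bool))) (s₁ s₂ : W × Bool) :
    sav E s₁ s₂ ⊆ E := fun _ he => he.1

lemma sdel_mono {W : Type} {E E' : Set (Sym2 (W × Bool))} {A A' : Set W}
    (h : E ⊆ E') (hA : A' ⊆ A) : sdel E A ⊆ sdel E' A' :=
  fun e he => ⟨h he.1, fun y hy hmem => he.2 y hy (hA hmem)⟩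

lemma pair_of_mem_mem {W : Type} {e : Sym2 W} {a b : W} (ha : a ∈ e) (hb : b ∈ e)
    (hne : a ≠ b) : e = s(a, b) := by
  induction e using Sym2.ind with
  | _ x y =>
    rw [Sym2.mem_iff] at ha hb
    rcases ha with rfl | rfl <;> rcases hb with rfl | rfl
    · exact absurd rfl hne
    · rfl
    · exact Sym2.eq_swap
    · exact absurd rfl hne

lemma bool_eq_of_ne_not {σ τ : Bool} (h : σ ≠ !τ) : σ = τ := by
  cases σ <;> cases τ <;> simp_all

lemma bool_not_of_ne {σ τ : Bool} (h : σ ≠ τ) : σ = !τ := by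
  cases σ <;> cases τ <;> simp_all

/-- A reach in the vertex-avoiding graph ends outside the avoided set. -/
lemma sdel_reach_notmem {W : Type} {E : Set (Sym2 (W × Bool))} {A : Set W} {a b : W}
    (h : myreach (sdel E A) a b) (ha : a ∉ A) : b ∉ A := by
  induction h with
  | refl => exact ha
  | tail _ h2 _ =>
    obtain ⟨e, he, σ, τ, rfl⟩ := h2
    exact he.2 _ (Sym2.mem_mk_right _ _)

/-- Decompose a reach at the first visit of the vertex set `A`. -/
lemma gen_exit {W : Type} {E : Set (Sym2 (W × Bool))} {A : Set W} {a b : W}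
    (ha : a ∉ A) (h : myreach E a b) :
    myreach (sdel E A) a b ∨
      ∃ x ∈ A, ∃ e ∈ E, ∃ s : Bool, (x, s) ∈ e ∧
        ∃ z ∈ e, z.1 ∉ A ∧ myreach (sdel E A) a z.1 := by
  induction h with
  | refl => exact Or.inl ReflTransGen.refl
  | tail h1 h2 ih =>
    rcases ih with ih | ih
    · obtain ⟨e, he, σ, τ, rfl⟩ := h2
      rename_i c d
      have hc : c ∉ A := sdel_reach_notmem ih ha
      by_cases hd : d ∈ A
      · exact Or.inr ⟨d, hd, _, he, τ, Sym2.mem_mk_right _ _, (c, σ),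
          Sym2.mem_mk_left _ _, hc, ih⟩
      · left
        refine ih.tail ⟨_, ⟨he, ?_⟩, σ, τ, rfl⟩
        intro y hy
        rw [Sym2.mem_iff] at hy
        rcases hy with rfl | rfl <;> assumption
    · exact Or.inr ih

end Infra

section Infra2

open Relation Sum

variable {G : BDGraph V}

lemma myreach_invariant {W : Type} {E : Set (Sym2 (W × Bool))} {P : W → Prop}
    (hP : ∀ a b, P a → myadj E a b → P b) {a b : W} (hr : myreach E a b) (ha : P a) :
    P b := by
  induction hr with
  | refl => exact ha
  | tail _ h2 ih => exact hP _ _ ih h2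

lemma myadj_of_pair {W : Type} {E : Set (Sym2 (W × Bool))} {e : Sym2 (W × Bool)}
    {y z : W × Bool} (he : e ∈ E) (heq : e = s(y, z)) : myadj E y.1 z.1 :=
  ⟨e, he, y.2, z.2, by rw [heq]⟩

lemma deleteVert_E_eq (G : BDGraph V) (x : V) : (G.deleteVert x).E = sdel G.E {x} := by
  ext e
  simp [BDGraph.deleteVert, sdel]

/-- Sign-consistency applied with an explicit anchor vertex. -/
lemma factS {x a : V} {σ τ : Bool} {e f : Sym2 (Side V)}
    (hsc : G.SignConsistent x) (hav : a ∈ G.verts) (hax : a ≠ x)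
    (he : e ∈ G.E) (hf : f ∈ G.E) (hxe : (x, σ) ∈ e) (hxf : (x, τ) ∈ f)
    (hce : ∀ y ∈ e, y.1 = x ∨ myreach (sdel G.E {x}) a y.1)
    (hcf : ∀ y ∈ f, y.1 = x ∨ myreach (sdel G.E {x}) a y.1) : σ = τ := by
  have hmem : a ∈ (G.deleteVert x).verts := ⟨hav, by simpa using hax⟩
  have conv : ∀ (e' : Sym2 (Side V)), (∀ y ∈ e', y.1 = x ∨ myreach (sdel G.E {x}) a y.1) →
      ∀ y ∈ e', y.1 = x ∨ (G.deleteVert x).uReach a y.1 := by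
    intro e' h y hy
    rcases h y hy with h1 | h1
    · exact Or.inl h1
    · right
      rw [uReach_eq_myreach, deleteVert_E_eq]
      exact h1
  exact hsc.2 a hmem e he f hf (conv e hce) (conv f hcf) σ τ hxe hxf

/-- A same-vertex sign violation at a sign-consistent vertex. -/
lemma factS0 {x : V} {σ : Bool} {e : Sym2 (Side V)}
    (hsc : G.SignConsistent x) (he : e ∈ G.E) (h1 : (x, σ) ∈ e) (h2 : (x, !σ) ∈ e) :
    False := by
  obtain ⟨hxv, a, hav, b, hbv, hax, hbx, -, -⟩ := hsc.1
  have hne : ((x, σ) : Side V) ≠ (x, !σ) := by simp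
  have hpair := pair_of_mem_mem h1 h2 hne
  have hcond : ∀ y ∈ e, y.1 = x ∨ myreach (sdel G.E {x}) a y.1 := by
    intro y hy
    rw [hpair, Sym2.mem_iff] at hy
    rcases hy with rfl | rfl <;> exact Or.inl rfl
  have := factS hsc hav hax he he h1 h2 hcond hcond
  simp at this

lemma mapAdj_elim {W W' : Type} {f : W × Bool → W' × Bool} {E : Set (Sym2 (W × Bool))}
    {a b : W'} (h : myadj (Sym2.map f '' E) a b) :
    ∃ e ∈ E, ∃ y z : W × Bool, e = s(y, z) ∧ (f y).1 = a ∧ (f z).1 = b := by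
  obtain ⟨e', he', σ, τ, heq⟩ := h
  obtain ⟨e, he, rfl⟩ := he'
  induction e using Sym2.ind with
  | _ y z =>
    rw [Sym2.map_pair_eq, Sym2.eq_iff] at heq
    rcases heq with ⟨h1, h2⟩ | ⟨h1, h2⟩
    · exact ⟨s(y, z), he, y, z, rfl, by rw [h1], by rw [h2]⟩
    · exact ⟨s(y, z), he, z, y, Sym2.eq_swap, by rw [h2], by rw [h1]⟩

lemma mapAdj_intro {W W' : Type} (f : W × Bool → W' × Bool) {E : Set (Sym2 (W × Bool))}
    {e : Sym2 (W × Bool)} {y z : W × Bool} (he : e ∈ E) (heq : e = s(y, z)) :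
    myadj (Sym2.map f '' E) (f y).1 (f z).1 := by
  refine ⟨Sym2.map f e, Set.mem_image_of_mem _ he, (f y).2, (f z).2, ?_⟩
  rw [heq, Sym2.map_pair_eq]

lemma scKey_sc {x : V} (h : G.SignConsistent x) (t : Bool) : scKey G (x, t) = (x, t) := by
  simp [scKey, h]

lemma splitAll_E (G : BDGraph V) :
    G.splitAll.E = Sym2.map (fun y : Side V => (scKey G y, y.2)) '' G.E := rfl

/-- The two copies of a sign-consistent vertex lie in different components of
`G.splitAll`. -/
lemma L2 {x : V} {s : Bool} (hsc : G.SignConsistent x) :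
    ¬ myreach G.splitAll.E (x, s) (x, !s) := by
  set M : Side V → Prop := fun k =>
    k = (x, s) ∨ (k.1 ≠ x ∧ ∃ e ∈ G.E, (x, s) ∈ e ∧
      ∃ z ∈ e, z.1 ≠ x ∧ myreach (sdel G.E {x}) z.1 k.1) with hM
  have closed : ∀ a b : Side V, M a → myadj G.splitAll.E a b → M b := by
    intro a b hMa hadj
    rw [splitAll_E] at hadj
    obtain ⟨e, he, y, z, hey, hkey, hkez⟩ := mapAdj_elim hadj
    have hyfst : y.1 = a.1 := by rw [← hkey]; exact (scKey_fst G y).symm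
    have hzfst : z.1 = b.1 := by rw [← hkez]; exact (scKey_fst G z).symm
    have hymem : y ∈ e := by rw [hey]; exact Sym2.mem_mk_left _ _
    have hzmem : z ∈ e := by rw [hey]; exact Sym2.mem_mk_right _ _
    rcases hMa with rfl | ⟨ha1, e₁, he₁, hxe₁, z₁, hz₁, hz₁x, hz₁r⟩
    · -- a = (x, s)
      have hy : y = (x, s) := by
        obtain ⟨y1, y2⟩ := y
        simp only at hyfst
        subst hyfst
        rwa [scKey_sc hsc] at hkey
      subst hy
      by_cases hzx : z.1 = x
      · have hz : z = (x, z.2) := by rw [← hzx]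
        rw [hz, scKey_sc hsc] at hkez
        by_cases hzs : z.2 = s
        · left; rw [← hkez, hzs]
        · exfalso
          have hzns : z.2 = !s := bool_not_of_ne hzs
          have hzm2 : (x, !s) ∈ e := by rw [← hzns, ← hz]; exact hzmem
          exact factS0 hsc he hymem hzm2
      · right
        refine ⟨by rw [← hkez, scKey_fst]; exact hzx, e, he, hymem, z, hzmem, hzx, ?_⟩
        rw [← hkez, scKey_fst]
        exact myreach_refl _ _
    · -- a.1 ≠ x, a in the far region
      have hyx : y.1 ≠ x := by rw [hyfst]; exact ha1
      by_cases hzx : z.1 = x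
      · -- z is at x; its sign must be s by sign-consistency
        have hz : z = (x, z.2) := by rw [← hzx]
        have hz₁v : z₁.1 ∈ G.verts := G.wf e₁ he₁ z₁ hz₁
        have hcond_e : ∀ w ∈ e, w.1 = x ∨ myreach (sdel G.E {x}) z₁.1 w.1 := by
          intro w hw
          rw [hey, Sym2.mem_iff] at hw
          rcases hw with rfl | rfl
          · right; rw [hyfst]; exact hz₁r
          · exact Or.inl hzx
        have hcond_e₁ : ∀ w ∈ e₁, w.1 = x ∨ myreach (sdel G.E {x}) z₁.1 w.1 := by
          intro w hw
          by_cases hwx : w.1 = x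
          · exact Or.inl hwx
          · right
            by_cases hwz : w = z₁
            · rw [hwz]; exact myreach_refl _ _
            · have hp : e₁ = s(z₁, w) := pair_of_mem_mem hz₁ hw (fun h => hwz h.symm)
              refine ReflTransGen.single (myadj_of_pair ⟨he₁, ?_⟩ hp)
              intro p hp'
              rw [hp, Sym2.mem_iff] at hp'
              rcases hp' with rfl | rfl <;> simpa
        have hzm2 : (x, z.2) ∈ e := by rw [← hz]; exact hzmem
        have hsign := factS hsc hz₁v hz₁x he₁ he hxe₁ hzm2 hcond_e₁ hcond_e
        left
        rw [← hkez, hz, scKey_sc hsc, hsign]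
      · -- extend the far region
        right
        refine ⟨by rw [← hkez, scKey_fst]; exact hzx, e₁, he₁, hxe₁, z₁, hz₁, hz₁x, ?_⟩
        rw [← hkez, scKey_fst]
        rw [← hyfst] at hz₁r
        refine myreach_trans hz₁r (ReflTransGen.single (myadj_of_pair ⟨he, ?_⟩ hey))
        intro p hp'
        rw [hey, Sym2.mem_iff] at hp'
        rcases hp' with rfl | rfl <;> simpa
  intro hreach
  have hfinal : M (x, !s) := myreach_invariant closed hreach (Or.inl rfl)
  rcases hfinal with h | ⟨h, -⟩
  · rw [Prod.mk.injEq] at h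
    simp at h
  · exact h rfl

end Infra2

/-- Separability characterised by plain reachability on the edge set with the two
split sides removed. -/
def sepchar (E : Set (Sym2 (Side V))) (u : V) (α : Bool) (v : V) (β : Bool) : Prop :=
  u ≠ v ∧ myreach (sav E (u, !α) (v, !β)) u v ∧
    ∀ e ∈ E, ((u, !α) ∈ e ∨ (v, !β) ∈ e) → ∀ y ∈ e, y ≠ (u, !α) → y ≠ (v, !β) →
      ¬ myreach (sav E (u, !α) (v, !β)) u y.1

section Infra3

open Relation Sum

variable {G : BDGraph V}

lemma split2_E (G : BDGraph V) (u : V) (α : Bool) (v : V) (β : Bool) :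
    (G.split2 u α v β).E = Sym2.map (splitMap u α v β) '' G.E := rfl

lemma sm_s1 (u : V) (α : Bool) (v : V) (β : Bool) :
    splitMap u α v β (u, !α) = (Sum.inr u, !α) := by
  unfold splitMap
  rw [if_pos rfl]

lemma sm_s2' {u : V} {α : Bool} {v : V} {β : Bool} {w : Side V}
    (h1 : w = (v, !β)) (h2 : w ≠ (u, !α)) :
    splitMap u α v β w = (Sum.inr v, !β) := by
  unfold splitMap
  rw [if_neg h2, if_pos h1]

lemma sm_other {u : V} {α : Bool} {v : V} {β : Bool} {y : Side V}
    (h1 : y ≠ (u, !α)) (h2 : y ≠ (v, !β)) :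
    splitMap u α v β y = (Sum.inl y.1, y.2) := by
  unfold splitMap
  rw [if_neg h1, if_neg h2]

lemma T1 {u : V} {α : Bool} {v : V} {β : Bool} {a b : V}
    (h : myreach (sav G.E (u, !α) (v, !β)) a b) :
    myreach (G.split2 u α v β).E (Sum.inl a) (Sum.inl b) := by
  refine ReflTransGen.lift Sum.inl (fun c d hcd => ?_) a b h
  obtain ⟨e, ⟨he, hn1, hn2⟩, σ, τ, rfl⟩ := hcd
  have h1 : ((c, σ) : Side V) ≠ (u, !α) := fun h => hn1 (h ▸ Sym2.mem_mk_left _ _)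
  have h2 : ((c, σ) : Side V) ≠ (v, !β) := fun h => hn2 (h ▸ Sym2.mem_mk_left _ _)
  have h3 : ((d, τ) : Side V) ≠ (u, !α) := fun h => hn1 (h ▸ Sym2.mem_mk_right _ _)
  have h4 : ((d, τ) : Side V) ≠ (v, !β) := fun h => hn2 (h ▸ Sym2.mem_mk_right _ _)
  have := mapAdj_intro (splitMap u α v β) he (rfl : s((c,σ),(d,τ)) = s((c,σ),(d,τ)))
  rwa [sm_other h1 h2, sm_other h3 h4] at this

/-- Any walk in the split graph starting from `inl u` (or from a vertex reachable
from `u` in the side-avoiding graph) stays on `inl` of the side-avoiding component,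
provided the boundary condition holds. -/
lemma no_exit {u : V} {α : Bool} {v : V} {β : Bool} {a : V} {z : V ⊕ V}
    (hbound : ∀ e ∈ G.E, ((u, !α) ∈ e ∨ (v, !β) ∈ e) → ∀ y ∈ e, y ≠ (u, !α) →
      y ≠ (v, !β) → ¬ myreach (sav G.E (u, !α) (v, !β)) u y.1)
    (hstart : myreach (sav G.E (u, !α) (v, !β)) u a)
    (hr : myreach (G.split2 u α v β).E (Sum.inl a) z) :
    ∃ c, z = Sum.inl c ∧ myreach (sav G.E (u, !α) (v, !β)) u c := by
  refine myreach_invariant (P := fun z => ∃ c, z = Sum.inl c ∧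
    myreach (sav G.E (u, !α) (v, !β)) u c) ?_ hr ⟨a, rfl, hstart⟩
  rintro z z' ⟨c, rfl, hc⟩ hadj
  rw [split2_E] at hadj
  obtain ⟨e, he, y, w, hey, hky, hkw⟩ := mapAdj_elim hadj
  have hymem : y ∈ e := by rw [hey]; exact Sym2.mem_mk_left _ _
  have hwmem : w ∈ e := by rw [hey]; exact Sym2.mem_mk_right _ _
  by_cases hy1 : y = (u, !α)
  · rw [hy1, sm_s1] at hky; exact absurd hky (by simp)
  by_cases hy2 : y = (v, !β)
  · rw [sm_s2' hy2 hy1] at hky; exact absurd hky (by simp)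
  rw [sm_other hy1 hy2] at hky
  have hyc : y.1 = c := by injection hky
  by_cases hw1 : w = (u, !α)
  · exact absurd hc (hyc ▸ hbound e he (Or.inl (hw1 ▸ hwmem)) y hymem hy1 hy2)
  by_cases hw2 : w = (v, !β)
  · exact absurd hc (hyc ▸ hbound e he (Or.inr (hw2 ▸ hwmem)) y hymem hy1 hy2)
  rw [sm_other hw1 hw2] at hkw
  refine ⟨w.1, hkw.symm, hc.tail ?_⟩
  have : myadj (sav G.E (u, !α) (v, !β)) y.1 w.1 := by
    refine myadj_of_pair ⟨he, ?_, ?_⟩ hey <;> intro hmem <;>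
      rw [hey, Sym2.mem_iff] at hmem
    · rcases hmem with h | h
      · exact hy1 h.symm
      · exact hw1 h.symm
    · rcases hmem with h | h
      · exact hy2 h.symm
      · exact hw2 h.symm
  rwa [hyc] at this

/-- `Separable` in terms of plain reachability on side-avoiding edge sets. -/
lemma sep_iff (G : BDGraph V) (u : V) (α : Bool) (v : V) (β : Bool) :
    Separable G u α v β ↔ sepchar G.E u α v β := by
  constructor
  · rintro ⟨hne, hpos, hn1, hn2, hn3, hn4⟩
    have key : ∀ z, myreach (G.split2 u α v β).E (Sum.inl u) z →
        (∃ c, z = Sum.inl c ∧ myreach (sav G.E (u, !α) (v, !β)) u c) ∨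
        myreach (G.split2 u α v β).E (Sum.inl u) (Sum.inr u) ∨
        myreach (G.split2 u α v β).E (Sum.inl u) (Sum.inr v) := by
      intro z hz
      refine myreach_invariant (P := fun z =>
        (∃ c, z = Sum.inl c ∧ myreach (sav G.E (u, !α) (v, !β)) u c) ∨
        myreach (G.split2 u α v β).E (Sum.inl u) (Sum.inr u) ∨
        myreach (G.split2 u α v β).E (Sum.inl u) (Sum.inr v)) ?_ hz
        (Or.inl ⟨u, rfl, myreach_refl _ _⟩)
      rintro z z' hP hadj
      rcases hP with ⟨c, rfl, hc⟩ | h | h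
      · rw [split2_E] at hadj
        obtain ⟨e, he, y, w, hey, hky, hkw⟩ := mapAdj_elim hadj
        have hymem : y ∈ e := by rw [hey]; exact Sym2.mem_mk_left _ _
        have hwmem : w ∈ e := by rw [hey]; exact Sym2.mem_mk_right _ _
        by_cases hy1 : y = (u, !α)
        · rw [hy1, sm_s1] at hky; exact absurd hky (by simp)
        by_cases hy2 : y = (v, !β)
        · rw [sm_s2' hy2 hy1] at hky; exact absurd hky (by simp)
        rw [sm_other hy1 hy2] at hky
        have hyc : y.1 = c := by injection hky
        have hreachc : myreach (G.split2 u α v β).E (Sum.inl u) (Sum.inl c) := T1 hc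
        have hstep := mapAdj_intro (splitMap u α v β) he hey
        rw [sm_other hy1 hy2, hyc] at hstep
        by_cases hw1 : w = (u, !α)
        · rw [hw1, sm_s1] at hstep
          exact Or.inr (Or.inl (hreachc.tail hstep))
        by_cases hw2 : w = (v, !β)
        · rw [sm_s2' hw2 hw1] at hstep
          exact Or.inr (Or.inr (hreachc.tail hstep))
        rw [sm_other hw1 hw2] at hkw
        refine Or.inl ⟨w.1, hkw.symm, hc.tail ?_⟩
        have : myadj (sav G.E (u, !α) (v, !β)) y.1 w.1 := by
          refine myadj_of_pair ⟨he, ?_, ?_⟩ hey <;> intro hmem <;>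
            rw [hey, Sym2.mem_iff] at hmem
          · rcases hmem with h | h
            · exact hy1 h.symm
            · exact hw1 h.symm
          · rcases hmem with h | h
            · exact hy2 h.symm
            · exact hw2 h.symm
        rwa [hyc] at this
      · exact Or.inr (Or.inl h)
      · exact Or.inr (Or.inr h)
    refine ⟨hne, ?_, ?_⟩
    · rcases key _ hpos with ⟨c, hceq, hr⟩ | h | h
      · injection hceq with hceq; subst hceq; exact hr
      · exact absurd h hn1
      · exact absurd h hn2
    · intro e he hsplit y hy hy1 hy2 hreach
      have hTr : myreach (G.split2 u α v β).E (Sum.inl u) (Sum.inl y.1) := T1 hreach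
      rcases hsplit with h | h
      · have hne' : y ≠ (u, !α) := hy1
        have hepair : e = s(y, (u, !α)) := pair_of_mem_mem hy h hne'
        have hstep := mapAdj_intro (splitMap u α v β) he hepair
        rw [sm_other hy1 hy2, sm_s1] at hstep
        exact hn1 (hTr.tail hstep)
      · by_cases hvu : ((v, !β) : Side V) = (u, !α)
        · have hepair : e = s(y, (u, !α)) := pair_of_mem_mem hy (hvu ▸ h) hy1
          have hstep := mapAdj_intro (splitMap u α v β) he hepair
          rw [sm_other hy1 hy2, sm_s1] at hstep
          exact hn1 (hTr.tail hstep)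
        · have hepair : e = s(y, (v, !β)) := pair_of_mem_mem hy h hy2
          have hstep := mapAdj_intro (splitMap u α v β) he hepair
          rw [sm_other hy1 hy2, sm_s2' rfl hvu] at hstep
          exact hn2 (hTr.tail hstep)
  · rintro ⟨hne, hpos, hbound⟩
    have hnoexit := fun {a z} (hs : myreach (sav G.E (u, !α) (v, !β)) u a) =>
      no_exit (G := G) (α := α) (β := β) hbound hs (z := z)
    refine ⟨hne, T1 hpos, ?_, ?_, ?_, ?_⟩ <;> intro h
    · obtain ⟨c, hc, -⟩ := hnoexit (myreach_refl _ _) h; exact absurd hc (by simp)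
    · obtain ⟨c, hc, -⟩ := hnoexit (myreach_refl _ _) h; exact absurd hc (by simp)
    · obtain ⟨c, hc, -⟩ := hnoexit hpos h; exact absurd hc (by simp)
    · obtain ⟨c, hc, -⟩ := hnoexit hpos h; exact absurd hc (by simp)

lemma snarlVerts_iff (G : BDGraph V) {u : V} {α : Bool} {v : V} {β : Bool} {w : V}
    (hs : sepchar G.E u α v β) :
    w ∈ SnarlVerts G u α v β ↔ myreach (sav G.E (u, !α) (v, !β)) u w := by
  constructor
  · intro h
    obtain ⟨c, hc, hr⟩ := no_exit hs.2.2 (myreach_refl _ u) h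
    injection hc with hc
    subst hc
    exact hr
  · intro h
    exact T1 h

end Infra3

section Infra4

open Relation Sum

variable {G : BDGraph V}

/-- A vertex-side is good for the component of `q` in `G.splitAll`. -/
def kg (G : BDGraph V) (q : Side V) (y : Side V) : Prop :=
  myreach G.splitAll.E q (scKey G y)

/-- The edges of the sign-cut graph determined by `q`. -/
def FEq (G : BDGraph V) (q : Side V) : Set (Sym2 (Side V)) :=
  {e | e ∈ G.E ∧ ∀ y ∈ e, kg G q y}

lemma FEq_subset (G : BDGraph V) (q : Side V) : FEq G q ⊆ G.E := fun _ he => he.1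

lemma kg_of_mem {q : Side V} {e : Sym2 (Side V)} {y z : Side V}
    (he : e ∈ G.E) (hy : y ∈ e) (hz : z ∈ e) (h : kg G q y) : kg G q z := by
  by_cases hyz : y = z
  · exact hyz ▸ h
  · have hpair := pair_of_mem_mem hy hz hyz
    have := mapAdj_intro (fun y : Side V => (scKey G y, y.2)) he hpair
    exact h.tail this

lemma mem_FEq_of_kg {q : Side V} {e : Sym2 (Side V)} {y : Side V}
    (he : e ∈ G.E) (hy : y ∈ e) (h : kg G q y) : e ∈ FEq G q :=
  ⟨he, fun _ hz => kg_of_mem he hy hz h⟩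

lemma kuniq {q : Side V} {x : V} {t₁ t₂ : Bool} (hsc : G.SignConsistent x)
    (h1 : kg G q (x, t₁)) (h2 : kg G q (x, t₂)) : t₁ = t₂ := by
  by_contra hne
  unfold kg at h1 h2
  rw [scKey_sc hsc] at h1 h2
  have ht : t₂ = !t₁ := bool_not_of_ne (Ne.symm hne)
  rw [ht] at h2
  exact L2 hsc (myreach_trans (myreach_symm h1) h2)

lemma sav_mono {W : Type} {E E' : Set (Sym2 (W × Bool))} (h : E ⊆ E') (s₁ s₂ : W × Bool) :
    sav E s₁ s₂ ⊆ sav E' s₁ s₂ := fun _ he => ⟨h he.1, he.2.1, he.2.2⟩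

lemma kg_first {q : Side V} {u : V} {α : Bool} {s₂ : Side V} {c : V}
    (hpos : myreach (sav (FEq G q) (u, !α) s₂) u c) (hne : u ≠ c) : kg G q (u, α) := by
  rcases hpos.cases_head with h | ⟨d, hadj, -⟩
  · exact absurd h hne
  · obtain ⟨e, ⟨he, hn1, hn2⟩, σ, τ, rfl⟩ := hadj
    have hmem : ((u, σ) : Side V) ∈ s((u,σ),(d,τ)) := Sym2.mem_mk_left _ _
    have hσ : σ ≠ !α := fun h => hn1 (h ▸ hmem)
    have := he.2 _ hmem
    rwa [bool_eq_of_ne_not hσ] at this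

lemma xfkey {q : Side V} {u v : V} {α β : Bool} {c : V} (huv : u ≠ v)
    (hkg : kg G q (u, α))
    (h : myreach (sav (FEq G q) (u, !α) (v, !β)) u c) :
    ∃ δ : Bool, ((c, δ) : Side V) ≠ (u, !α) ∧ ((c, δ) : Side V) ≠ (v, !β) ∧ kg G q (c, δ) := by
  induction h with
  | refl =>
    refine ⟨α, by simp, fun h => huv (congrArg Prod.fst h), hkg⟩
  | @tail b d _ h2 _ =>
    obtain ⟨e, ⟨he, hn1, hn2⟩, σ, τ, rfl⟩ := h2
    have hmem : ((d, τ) : Side V) ∈ s((b, σ), (d, τ)) := Sym2.mem_mk_right _ _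
    exact ⟨τ, fun h => hn1 (h ▸ hmem), fun h => hn2 (h ▸ hmem), he.2 _ hmem⟩

/-- The last `FEq`-edge on an avoiding walk from `u` into `x`. -/
lemma lastedge {q : Side V} {u v x : V} {α β : Bool}
    (hx : myreach (sav (FEq G q) (u, !α) (v, !β)) u x) (hxu : x ≠ u) :
    ∃ e ∈ FEq G q, ∃ δ : Bool, (x, δ) ∈ e ∧ ((x, δ) : Side V) ≠ (u, !α) ∧
      ((x, δ) : Side V) ≠ (v, !β) ∧ ∃ z ∈ e, z.1 ≠ x ∧ myreach (sdel G.E {x}) u z.1 := by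
  have hu : u ∉ ({x} : Set V) := by simpa using hxu.symm
  rcases gen_exit hu hx with h | ⟨x₀, hx₀, e, he, s, hmem, z, hz, hzA, hreach⟩
  · exact absurd (sdel_reach_notmem h hu) (by simp)
  · have hx₀x : x₀ = x := hx₀
    subst hx₀x
    refine ⟨e, he.1, s, hmem, fun h => he.2.1 (h ▸ hmem), fun h => he.2.2 (h ▸ hmem),
      z, hz, by simpa using hzA, ?_⟩
    refine myreach_mono (sdel_mono ?_ (fun a ha => ha)) hreach
    exact fun e' he' => FEq_subset G q (sav_subset _ _ _ he')

end Infra4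

section Helpers5

open Relation

variable {G : BDGraph V}

lemma scKey_nsc {x : V} (h : ¬ G.SignConsistent x) (t : Bool) :
    scKey G (x, t) = (x, true) := by
  simp [scKey, h]

lemma cond_of_pair {x a : V} {e : Sym2 (Side V)} {p w : Side V}
    (hpe : p ∈ e) (hwe : w ∈ e) (hne : p ≠ w) (hp : p.1 = x)
    (hw : myreach (sdel G.E {x}) a w.1) :
    ∀ y ∈ e, y.1 = x ∨ myreach (sdel G.E {x}) a y.1 := by
  have hpair := pair_of_mem_mem hpe hwe hne
  intro y hy
  rw [hpair, Sym2.mem_iff] at hy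
  rcases hy with rfl | rfl
  · exact Or.inl hp
  · exact Or.inr hw

lemma sdel_adj_of_mem {W : Type} {E : Set (Sym2 (W × Bool))} {x : W}
    {e : Sym2 (W × Bool)} {p w : W × Bool} (he : e ∈ E) (hp : p ∈ e) (hw : w ∈ e)
    (hne : p ≠ w) (hpx : p.1 ≠ x) (hwx : w.1 ≠ x) : myadj (sdel E {x}) p.1 w.1 := by
  have hpair := pair_of_mem_mem hp hw hne
  refine myadj_of_pair ⟨he, ?_⟩ hpair
  intro y hy
  rw [hpair, Sym2.mem_iff] at hy
  rcases hy with rfl | rfl <;> simpa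

/-- Structure extracted at a vertex of the sign-cut component carrying a non-good side. -/
lemma exit_data {q : Side V} {u v c : V} {α β σ : Bool}
    (huv : u ≠ v) (hkgu : kg G q (u, α))
    (hc : myreach (sav (FEq G q) (u, !α) (v, !β)) u c)
    (h1 : ((c, σ) : Side V) ≠ (u, !α)) (h2 : ((c, σ) : Side V) ≠ (v, !β))
    (hnkg : ¬ kg G q (c, σ)) :
    c ≠ u ∧ c ≠ v ∧ G.SignConsistent c ∧ ∃ δ, δ ≠ σ ∧ kg G q (c, δ) := by
  obtain ⟨δ, hδ1, hδ2, hδkg⟩ := xfkey huv hkgu hc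
  have hcu : c ≠ u := by
    rintro rfl
    have hσ : σ = α := bool_eq_of_ne_not (fun h => h1 (by rw [h]))
    exact hnkg (hσ ▸ hkgu)
  have hcv : c ≠ v := by
    rintro rfl
    have hσ : σ = β := bool_eq_of_ne_not (fun h => h2 (by rw [h]))
    have hδ : δ = β := bool_eq_of_ne_not (fun h => hδ2 (by rw [h]))
    refine hnkg ?_
    rw [hσ, ← hδ]
    exact hδkg
  have hsc : G.SignConsistent c := by
    by_contra hnsc
    refine hnkg ?_
    unfold kg at hδkg ⊢
    rw [scKey_nsc hnsc δ] at hδkg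
    rw [scKey_nsc hnsc σ]
    exact hδkg
  refine ⟨hcu, hcv, hsc, δ, ?_, hδkg⟩
  rintro rfl
  exact hnkg hδkg

end Helpers5

section Bigs

open Relation

variable {G : BDGraph V}

lemma savF_sub_avG {q : Side V} (s₁ s₂ : Side V) :
    sav (FEq G q) s₁ s₂ ⊆ sav G.E s₁ s₂ := sav_mono (FEq_subset G q) _ _

lemma sdel_savF_sub {q : Side V} {x : V} (s₁ s₂ : Side V) :
    sdel (sav (FEq G q) s₁ s₂) {x} ⊆ sdel G.E {x} :=
  sdel_mono (fun e' he' => FEq_subset G q (sav_subset _ _ _ he')) (fun _ ha => ha)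

/-- Separability of a pair in a sign-cut graph implies separability in `G`. -/
lemma sep_up {q : Side V} {u : V} {α : Bool} {v : V} {β : Bool}
    (h : sepchar (FEq G q) u α v β) : sepchar G.E u α v β := by
  obtain ⟨hne, hFpos, hFbound⟩ := h
  have hkgu : kg G q (u, α) := kg_first hFpos hne
  have huvert : u ∈ G.verts := by
    rcases hFpos.cases_head with h | ⟨c, hadj, -⟩
    · exact absurd h hne
    · obtain ⟨e, he, σ, τ, rfl⟩ := hadj
      exact G.wf _ (FEq_subset G q he.1) _ (Sym2.mem_mk_left _ _)
  refine ⟨hne, myreach_mono (savF_sub_avG _ _) hFpos, ?_⟩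
  intro e₀ he₀ hsplit y₀ hy₀ hy₀1 hy₀2 hreach
  set Q : V → Prop := fun c => myreach (sav (FEq G q) (u,!α) (v,!β)) u c ∨
    ∃ x τ, myreach (sav (FEq G q) (u,!α) (v,!β)) u x ∧ x ≠ u ∧ x ≠ v ∧
      G.SignConsistent x ∧ ¬ kg G q (x, τ) ∧
      ∃ e ∈ G.E, (x, τ) ∈ e ∧ ∃ z ∈ e, z.1 ≠ x ∧ myreach (sdel G.E {x}) z.1 c with hQdef
  have hQclosed : ∀ a b, Q a → myadj (sav G.E (u,!α) (v,!β)) a b → Q b := by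
    rintro a b hQa ⟨e, ⟨he, hn1, hn2⟩, σ, τ, rfl⟩
    have hma : ((a,σ) : Side V) ∈ s((a,σ),(b,τ)) := Sym2.mem_mk_left _ _
    have hmb : ((b,τ) : Side V) ∈ s((a,σ),(b,τ)) := Sym2.mem_mk_right _ _
    have hsa1 : ((a,σ) : Side V) ≠ (u,!α) := fun h => hn1 (h ▸ hma)
    have hsa2 : ((a,σ) : Side V) ≠ (v,!β) := fun h => hn2 (h ▸ hma)
    by_cases hba : b = a
    · rw [hba]; exact hQa
    rcases hQa with hQf | ⟨x, τ', hxQf, hxu, hxv, hscx, hnkgx, e₁, he₁, hxe₁, z₁, hz₁, hz₁x, hz₁r⟩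
    · by_cases hk : kg G q (a,σ)
      · exact Or.inl (hQf.tail ⟨_, ⟨mem_FEq_of_kg he hma hk, hn1, hn2⟩, σ, τ, rfl⟩)
      · obtain ⟨hau, hav', hsc, δ, hδσ, hδkg⟩ := exit_data hne hkgu hQf hsa1 hsa2 hk
        exact Or.inr ⟨a, σ, hQf, hau, hav', hsc, hk, _, he, hma, (b,τ), hmb,
          hba, myreach_refl _ _⟩
    · have hax : a ≠ x := by
        have := sdel_reach_notmem hz₁r (by simpa using hz₁x)
        simpa using this
      by_cases hbx : b = x
      · refine Or.inl ?_
        rw [hbx]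
        exact hxQf
      · refine Or.inr ⟨x, τ', hxQf, hxu, hxv, hscx, hnkgx, e₁, he₁, hxe₁, z₁, hz₁,
          hz₁x, hz₁r.tail ?_⟩
        exact sdel_adj_of_mem he hma hmb
          (fun h => hba (congrArg Prod.fst h).symm) hax hbx
  have hQy : Q y₀.1 := myreach_invariant hQclosed hreach (Or.inl (myreach_refl _ _))
  rcases hQy with hQf | ⟨x, τ', hxQf, hxu, hxv, hscx, hnkgx, e₁, he₁, hxe₁, z₁, hz₁, hz₁x, hz₁r⟩
  · by_cases hk : kg G q y₀
    · exact hFbound e₀ (mem_FEq_of_kg he₀ hy₀ hk) hsplit y₀ hy₀ hy₀1 hy₀2 hQf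
    · obtain ⟨hcu, hcv, hsc, δ, hδσ, hδkg⟩ :=
        exit_data (σ := y₀.2) hne hkgu hQf hy₀1 hy₀2 hk
      obtain ⟨e_c, he_c, δ', hδ'mem, -, -, z_c, hz_c, hz_cx, hz_cr⟩ := lastedge hQf hcu
      have hδ'δ : δ' = δ := kuniq hsc (he_c.2 _ hδ'mem) hδkg
      have hnez : ((y₀.1, δ') : Side V) ≠ z_c := fun h => hz_cx (by rw [← h])
      have hfin : y₀.2 = δ' → False := by
        intro hfact
        refine hk ?_
        rw [show y₀ = (y₀.1, δ) by rw [← hδ'δ, ← hfact]]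
        exact hδkg
      rcases hsplit with hsp | hsp
      · have hcond₀ := cond_of_pair (G := G) (a := u) hy₀ hsp hy₀1 rfl (myreach_refl _ _)
        have hcond_c := cond_of_pair (G := G) (a := u) hδ'mem hz_c hnez rfl hz_cr
        exact hfin (factS hsc huvert (Ne.symm hcu) he₀ (FEq_subset G q he_c)
          hy₀ hδ'mem hcond₀ hcond_c)
      · have hvV : v ∈ G.verts := G.wf e₀ he₀ _ hsp
        have hvc : v ≠ y₀.1 := Ne.symm hcv
        rcases gen_exit (show v ∉ ({y₀.1} : Set V) by simpa using hvc)
            (myreach_symm hFpos) with hL |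
            ⟨x₀, hx₀, e'', he'', s'', hmem'', z'', hz'', hz''x, hz''r⟩
        · have hvu : myreach (sdel G.E {y₀.1}) v u :=
            myreach_mono (sdel_savF_sub _ _) hL
          have hcond₀ := cond_of_pair (G := G) (a := v) hy₀ hsp hy₀2 rfl (myreach_refl _ _)
          have hcond_c := cond_of_pair (G := G) (a := v) hδ'mem hz_c hnez rfl
            (myreach_trans hvu hz_cr)
          exact hfin (factS hsc hvV hvc he₀ (FEq_subset G q he_c)
            hy₀ hδ'mem hcond₀ hcond_c)
        · have hx₀c : x₀ = y₀.1 := hx₀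
          rw [hx₀c] at hmem''
          have hkg'' : kg G q (y₀.1, s'') := (he''.1).2 _ hmem''
          have hs''δ : s'' = δ := kuniq hsc hkg'' hδkg
          have hne'' : ((y₀.1, s'') : Side V) ≠ z'' := by
            intro h
            apply hz''x
            rw [← h]
            rfl
          have hcond₀ := cond_of_pair (G := G) (a := v) hy₀ hsp hy₀2 rfl (myreach_refl _ _)
          have hcond'' := cond_of_pair (G := G) (a := v) hmem'' hz'' hne'' rfl
            (myreach_mono (sdel_savF_sub _ _) hz''r)
          have hfact := factS hsc hvV hvc he₀ (FEq_subset G q (he''.1)) hy₀ hmem''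
            hcond₀ hcond''
          exact hfin (hfact.trans (hs''δ.trans hδ'δ.symm))
  · obtain ⟨δ, hδ1, hδ2, hδkg⟩ := xfkey hne hkgu hxQf
    have hτδ : τ' ≠ δ := fun h => hnkgx (h ▸ hδkg)
    obtain ⟨e_x, he_x, δ'', hδ''mem, -, -, z_x, hz_x, hz_xx, hz_xr⟩ := lastedge hxQf hxu
    have hδ''δ : δ'' = δ := kuniq hscx (he_x.2 _ hδ''mem) hδkg
    rw [hδ''δ] at hδ''mem
    have hyx : y₀.1 ≠ x := by
      have := sdel_reach_notmem hz₁r (by simpa using hz₁x)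
      simpa using this
    have hne₁ : ((x, τ') : Side V) ≠ z₁ := fun h => hz₁x (by rw [← h])
    have hne_x : ((x, δ) : Side V) ≠ z_x := fun h => hz_xx (by rw [← h])
    rcases hsplit with hsp | hsp
    · have hz₁u : myreach (sdel G.E {x}) z₁.1 u := by
        by_cases hyu : y₀.1 = u
        · rw [← hyu]; exact hz₁r
        · refine hz₁r.tail ?_
          have : y₀ ≠ ((u, !α) : Side V) := hy₀1
          exact sdel_adj_of_mem he₀ hy₀ hsp this hyx (Ne.symm hxu)
      have hcond₁ := cond_of_pair (G := G) (a := u) hxe₁ hz₁ hne₁ rfl (myreach_symm hz₁u)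
      have hcond_x := cond_of_pair (G := G) (a := u) hδ''mem hz_x hne_x rfl hz_xr
      exact hτδ (factS hscx huvert (Ne.symm hxu) he₁ (FEq_subset G q he_x)
        hxe₁ hδ''mem hcond₁ hcond_x)
    · have hz₁v : myreach (sdel G.E {x}) z₁.1 v := by
        by_cases hyv : y₀.1 = v
        · rw [← hyv]; exact hz₁r
        · exact hz₁r.tail (sdel_adj_of_mem he₀ hy₀ hsp hy₀2 hyx (Ne.symm hxv))
      have hvV : v ∈ G.verts := G.wf e₀ he₀ _ hsp
      rcases gen_exit (show v ∉ ({x} : Set V) by simpa using (Ne.symm hxv))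
          (myreach_symm hFpos) with hL |
          ⟨x₀, hx₀, e'', he'', s'', hmem'', z'', hz'', hz''x, hz''r⟩
      · have hvu : myreach (sdel G.E {x}) v u := myreach_mono (sdel_savF_sub _ _) hL
        have hcond₁ := cond_of_pair (G := G) (a := u) hxe₁ hz₁ hne₁ rfl
          (myreach_trans (myreach_symm hvu) (myreach_symm hz₁v))
        have hcond_x := cond_of_pair (G := G) (a := u) hδ''mem hz_x hne_x rfl hz_xr
        exact hτδ (factS hscx huvert (Ne.symm hxu) he₁ (FEq_subset G q he_x)
          hxe₁ hδ''mem hcond₁ hcond_x)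
      · have hx₀x : x₀ = x := hx₀
        rw [hx₀x] at hmem''
        have hkg'' : kg G q (x, s'') := (he''.1).2 _ hmem''
        have hs''δ : s'' = δ := kuniq hscx hkg'' hδkg
        have hne'' : ((x, s'') : Side V) ≠ z'' := by
          intro h
          apply hz''x
          rw [← h]
          rfl
        have hcond₁ := cond_of_pair (G := G) (a := v) hxe₁ hz₁ hne₁ rfl (myreach_symm hz₁v)
        have hcond'' := cond_of_pair (G := G) (a := v) hmem'' hz'' hne'' rfl
          (myreach_mono (sdel_savF_sub _ _) hz''r)
        have hfact := factS hscx hvV (Ne.symm hxv) he₁ (FEq_subset G q (he''.1))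
          hxe₁ hmem'' hcond₁ hcond''
        exact hτδ (hfact.trans hs''δ)

end Bigs

section Witx

open Relation

variable {G : BDGraph V}

/-- If the pair is separable in `G` but `v` is not reachable in the sign-cut graph
of `(u,α)`, then a sign-consistent exit vertex provides a witness pair. -/
lemma witx {q : Side V} {u : V} {α : Bool} {v : V} {β : Bool}
    (hkg : kg G q (u, α)) (hs : sepchar G.E u α v β)
    (hv : ¬ myreach (sav (FEq G q) (u, !α) (v, !β)) u v) :
    ∃ x δ, myreach (sav G.E (u, !α) (v, !β)) u x ∧ x ≠ u ∧ x ≠ v ∧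
      sepchar G.E u α x δ ∧ sepchar G.E x (!δ) v β := by
  obtain ⟨hne, hGpos, hGbound⟩ := hs
  have huvert : u ∈ G.verts := by
    rcases hGpos.cases_head with h | ⟨c, hadj, -⟩
    · exact absurd h hne
    · obtain ⟨e, he, σ, τ, rfl⟩ := hadj
      exact G.wf _ he.1 _ (Sym2.mem_mk_left _ _)
  set Qf : Set V := {c | myreach (sav (FEq G q) (u, !α) (v, !β)) u c} with hQfdef
  have hvQ : v ∉ Qf := hv
  have huQ : u ∈ Qf := myreach_refl _ _
  rcases gen_exit hvQ (myreach_symm hGpos) with hL |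
      ⟨x, hxQ, e₀, he₀avG, σ, hmemx, z₀, hz₀, hz₀Q, hDr⟩
  · exact absurd huQ (sdel_reach_notmem hL hvQ)
  have he₀ : e₀ ∈ G.E := he₀avG.1
  have hn1 : ((u, !α) : Side V) ∉ e₀ := he₀avG.2.1
  have hn2 : ((v, !β) : Side V) ∉ e₀ := he₀avG.2.2
  have hz₀x : z₀.1 ≠ x := fun h => hz₀Q (h ▸ hxQ)
  have hnepair : ((x, σ) : Side V) ≠ z₀ := fun h => hz₀x (congrArg Prod.fst h).symm
  have hnk : ¬ kg G q (x, σ) := by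
    intro hkx
    refine hz₀Q ?_
    have hememF : e₀ ∈ sav (FEq G q) (u, !α) (v, !β) :=
      ⟨mem_FEq_of_kg he₀ hmemx hkx, hn1, hn2⟩
    exact hxQ.tail (myadj_of_pair hememF (pair_of_mem_mem hmemx hz₀ hnepair))
  have hx1 : ((x, σ) : Side V) ≠ (u, !α) := fun h => hn1 (h ▸ hmemx)
  have hx2 : ((x, σ) : Side V) ≠ (v, !β) := fun h => hn2 (h ▸ hmemx)
  obtain ⟨hxu, hxv, hscx, δ, hδσ, hδkg⟩ := exit_data hne hkg hxQ hx1 hx2 hnk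
  have hσδ : σ = !δ := bool_not_of_ne (Ne.symm hδσ)
  rw [hσδ] at hmemx hnepair
  obtain ⟨e_x, he_x, δ'', hδ''mem, -, -, z_x, hz_x, hz_xx, hz_xr⟩ := lastedge hxQ hxu
  have hδ''δ : δ'' = δ := kuniq hscx (he_x.2 _ hδ''mem) hδkg
  rw [hδ''δ] at hδ''mem
  have hne_x : ((x, δ) : Side V) ≠ z_x := fun h => hz_xx (by rw [← h])
  have hcond_x : ∀ w ∈ e_x, w.1 = x ∨ myreach (sdel G.E {x}) u w.1 :=
    cond_of_pair (G := G) hδ''mem hz_x hne_x rfl hz_xr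
  have he_xG : e_x ∈ G.E := FEq_subset G q he_x
  have hDrx : myreach (sdel G.E {x}) v z₀.1 := by
    refine myreach_mono (sdel_mono (sav_subset _ _ _) ?_) hDr
    intro a ha
    exact (show a = x from ha) ▸ hxQ
  -- `InN c` : `c` lies behind the non-good side of `x`
  set InN : V → Prop := fun c => ∃ e ∈ G.E, ((x, !δ) : Side V) ∈ e ∧
    ∃ z ∈ e, z.1 ≠ x ∧ myreach (sdel G.E {x}) z.1 c with hInNdef
  have hInNu : ¬ InN u := by
    rintro ⟨e, he, hmem, z, hz, hzx, hzr⟩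
    have hnez : ((x, !δ) : Side V) ≠ z := fun h => hzx (by rw [← h])
    have hcond := cond_of_pair (G := G) (a := u) hmem hz hnez rfl (myreach_symm hzr)
    have := factS hscx huvert (Ne.symm hxu) he he_xG hmem hδ''mem hcond hcond_x
    simp at this
  have hInNv : InN v := ⟨e₀, he₀, hmemx, z₀, hz₀, hz₀x, myreach_symm hDrx⟩
  have hxQG : myreach (sav G.E (u, !α) (v, !β)) u x :=
    myreach_mono (savF_sub_avG _ _) hxQ
  refine ⟨x, δ, hxQG, hxu, hxv, ?_, ?_⟩
  · -- `sepchar G.E u α x δ`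
    have hsubF : sav (FEq G q) (u, !α) (v, !β) ⊆ sav G.E (u, !α) (x, !δ) := by
      rintro e ⟨he, h1, h2⟩
      refine ⟨FEq_subset G q he, h1, fun hmem => ?_⟩
      have := kuniq hscx (he.2 _ hmem) hδkg
      simp at this
    refine ⟨Ne.symm hxu, myreach_mono hsubF hxQ, ?_⟩
    intro e' he' hsplit y' hy' h1 h2 hr
    -- invariant for reach in `sav G.E (u,!α) (x,!δ)` from `u`
    set P1 : V → Prop := fun c =>
      myreach (sav G.E (u, !α) (v, !β)) u c ∧ (c = x ∨ ¬ InN c) with hP1def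
    have hP1v : ¬ P1 v := by
      rintro ⟨-, h | h⟩
      · exact hxv h.symm
      · exact h hInNv
    have hP1closed : ∀ a b, P1 a → myadj (sav G.E (u, !α) (x, !δ)) a b → P1 b := by
      rintro a b ⟨hra, hfa⟩ ⟨e, ⟨he, hp1, hp2⟩, σ', τ', rfl⟩
      have hma : ((a, σ') : Side V) ∈ s((a, σ'), (b, τ')) := Sym2.mem_mk_left _ _
      have hmb : ((b, τ') : Side V) ∈ s((a, σ'), (b, τ')) := Sym2.mem_mk_right _ _
      have hfb : b = x ∨ ¬ InN b := by
        by_cases hbx : b = x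
        · exact Or.inl hbx
        by_cases hax : a = x
        · -- a = x : the step uses a (x,δ)-edge
          subst hax
          have hσ'δ : σ' = δ := by
            refine bool_eq_of_ne_not (fun h => hp2 ?_)
            rw [← h]
            exact hma
          have hma' : ((a, δ) : Side V) ∈ s((a, σ'), (b, τ')) := by
            rw [← hσ'δ]
            exact hma
          right
          rintro ⟨e₂, he₂, hm₂, z₂, hz₂, hz₂x, hz₂r⟩
          have hbV : b ∈ G.verts := G.wf _ he _ hmb
          have hnez₂ : ((a, !δ) : Side V) ≠ z₂ := fun h => hz₂x (by rw [← h])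
          have hcond₂ := cond_of_pair (G := G) (a := b) hm₂ hz₂ hnez₂ rfl
            (myreach_symm hz₂r)
          have hconde := cond_of_pair (G := G) (a := b) hma' hmb
            (fun h => hbx (congrArg Prod.fst h).symm) rfl (myreach_refl _ _)
          have := factS hscx hbV hbx he he₂ hma' hm₂ hconde hcond₂
          simp at this
        · -- a ≠ x
          have hnia : ¬ InN a := by
            rcases hfa with h | h
            · exact absurd h hax
            · exact h
          right
          rintro ⟨e₂, he₂, hm₂, z₂, hz₂, hz₂x, hz₂r⟩
          refine hnia ⟨e₂, he₂, hm₂, z₂, hz₂, hz₂x, hz₂r.tail ?_⟩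
          refine myadj_of_pair (e := s((a, σ'), (b, τ')))
            (y := ((b, τ') : Side V)) (z := ((a, σ') : Side V)) ⟨he, ?_⟩ Sym2.eq_swap
          intro p hp'
          rw [Sym2.mem_iff] at hp'
          rcases hp' with rfl | rfl <;> simpa
      have hbv : b ≠ v := by
        rintro rfl
        rcases hfb with h | h
        · exact hxv h.symm
        · exact h hInNv
      have hav' : a ≠ v := by
        rintro rfl
        exact hP1v ⟨hra, hfa⟩
      have heavG : s((a, σ'), (b, τ')) ∈ sav G.E (u, !α) (v, !β) := by
        refine ⟨he, hp1, ?_⟩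
        intro hmem
        rw [Sym2.mem_iff] at hmem
        rcases hmem with h | h
        · exact hav' (congrArg Prod.fst h).symm
        · exact hbv (congrArg Prod.fst h).symm
      exact ⟨hra.tail ⟨_, heavG, σ', τ', rfl⟩, hfb⟩
    have hPy := myreach_invariant hP1closed hr ⟨myreach_refl _ _, Or.inr hInNu⟩
    rcases hsplit with hsp | hsp
    · by_cases hyv : y' = ((v, !β) : Side V)
      · refine hP1v ?_
        rw [← show y'.1 = v from congrArg Prod.fst hyv]
        exact hPy
      · exact hGbound e' he' (Or.inl hsp) y' hy' h1 hyv hPy.1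
    · by_cases hyx : y'.1 = x
      · have hy'eq : y' = (x, y'.2) := by rw [← hyx]
        have hthis : y'.2 = δ := by
          refine bool_eq_of_ne_not (fun h => h2 ?_)
          rw [hy'eq, h]
        have hyδ : y' = (x, δ) := by rw [hy'eq, hthis]
        refine factS0 (σ := !δ) hscx he' hsp ?_
        rw [Bool.not_not, ← hyδ]
        exact hy'
      · rcases hPy.2 with h | h
        · exact hyx h
        · exact h ⟨e', he', hsp, y', hy', hyx, myreach_refl _ _⟩
  · -- `sepchar G.E x (!δ) v β`
    unfold sepchar
    rw [Bool.not_not]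
    have hsub2 : sdel (sav G.E (u, !α) (v, !β)) Qf ⊆ sav G.E (x, δ) (v, !β) := by
      rintro e ⟨⟨he, h1, h2⟩, hverts⟩
      exact ⟨he, fun hmem => hverts _ hmem hxQ, h2⟩
    refine ⟨hxv, ?_, ?_⟩
    · -- positive direction
      have he₀' : e₀ ∈ sav G.E (x, δ) (v, !β) := by
        refine ⟨he₀, ?_, hn2⟩
        intro hmem
        rw [pair_of_mem_mem hmemx hz₀ hnepair, Sym2.mem_iff] at hmem
        rcases hmem with h | h
        · have := congrArg Prod.snd h
          simp at this
        · exact hz₀x (congrArg Prod.fst h).symm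
      exact ReflTransGen.head
        (myadj_of_pair (y := ((x, !δ) : Side V)) he₀'
          (pair_of_mem_mem hmemx hz₀ hnepair))
        (myreach_symm (myreach_mono hsub2 hDr))
    · -- boundary
      intro e' he' hsplit y' hy' h1 h2 hr
      set P2 : V → Prop := fun c =>
        (c = x ∨ ¬ myreach (sdel G.E {x}) u c) ∧
          myreach (sav G.E (u, !α) (v, !β)) u c with hP2def
      have hP2closed : ∀ a b, P2 a → myadj (sav G.E (x, δ) (v, !β)) a b → P2 b := by
        rintro a b ⟨hfa, hra⟩ ⟨e, ⟨he, hp1, hp2⟩, σ', τ', rfl⟩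
        have hma : ((a, σ') : Side V) ∈ s((a, σ'), (b, τ')) := Sym2.mem_mk_left _ _
        have hmb : ((b, τ') : Side V) ∈ s((a, σ'), (b, τ')) := Sym2.mem_mk_right _ _
        have hfb : b = x ∨ ¬ myreach (sdel G.E {x}) u b := by
          by_cases hbx : b = x
          · exact Or.inl hbx
          by_cases hax : a = x
          · subst hax
            have hσ'δ : σ' = !δ := by
              refine bool_not_of_ne (fun h => hp1 ?_)
              rw [← h]
              exact hma
            have hma' : ((a, !δ) : Side V) ∈ s((a, σ'), (b, τ')) := by
              rw [← hσ'δ]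
              exact hma
            right
            intro hub
            have hconde := cond_of_pair (G := G) (a := u) hma' hmb
              (fun h => hbx (congrArg Prod.fst h).symm) rfl hub
            have := factS hscx huvert (Ne.symm hxu) he he_xG hma' hδ''mem
              hconde hcond_x
            simp at this
          · have hnra : ¬ myreach (sdel G.E {x}) u a := by
              rcases hfa with h | h
              · exact absurd h hax
              · exact h
            right
            intro hub
            refine hnra (hub.tail ?_)
            refine myadj_of_pair (e := s((a, σ'), (b, τ')))
              (y := ((b, τ') : Side V)) (z := ((a, σ') : Side V)) ⟨he, ?_⟩ Sym2.eq_swap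
            intro p hp'
            rw [Sym2.mem_iff] at hp'
            rcases hp' with rfl | rfl <;> simpa
        have hbu : b ≠ u := by
          rintro rfl
          rcases hfb with h | h
          · exact hxu h.symm
          · exact h (myreach_refl _ _)
        have hau : a ≠ u := by
          rintro rfl
          rcases hfa with h | h
          · exact hxu h.symm
          · exact h (myreach_refl _ _)
        have heavG : s((a, σ'), (b, τ')) ∈ sav G.E (u, !α) (v, !β) := by
          refine ⟨he, ?_, hp2⟩
          intro hmem
          rw [Sym2.mem_iff] at hmem
          rcases hmem with h | h
          · exact hau (congrArg Prod.fst h).symm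
          · exact hbu (congrArg Prod.fst h).symm
        exact ⟨hfb, hra.tail ⟨_, heavG, σ', τ', rfl⟩⟩
      have hPy := myreach_invariant hP2closed hr ⟨Or.inl rfl, hxQG⟩
      rcases hsplit with hsp | hsp
      · -- (x, δ) ∈ e'
        by_cases hyx : y'.1 = x
        · have hy'eq : y' = (x, y'.2) := by rw [← hyx]
          have hthis : y'.2 = !δ := by
            refine bool_not_of_ne (fun h => h1 ?_)
            rw [hy'eq, h]
          have hyδ : y' = (x, !δ) := by rw [hy'eq, hthis]
          refine factS0 (σ := δ) hscx he' hsp ?_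
          rw [← hyδ]
          exact hy'
        · rcases gen_exit (show y'.1 ∉ ({x} : Set V) by simpa using hyx)
              (myreach_symm hr) with hL2 |
              ⟨x₂, hx₂, e₅, he₅, t, hmem₅, z₅, hz₅, hz₅x, hz₅r⟩
          · exact absurd (sdel_reach_notmem hL2 (by simpa using hyx)) (by simp)
          · have hx₂x : x₂ = x := hx₂
            rw [hx₂x] at hmem₅
            have htδ : t = !δ := by
              refine bool_not_of_ne (fun h => he₅.2.1 ?_)
              rw [← h]
              exact hmem₅
            rw [htδ] at hmem₅
            have hyV : y'.1 ∈ G.verts := G.wf e' he' y' hy'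
            have hz₅r' : myreach (sdel G.E {x}) y'.1 z₅.1 :=
              myreach_mono (sdel_mono (sav_subset _ _ _) (fun a ha => ha)) hz₅r
            have hz₅x' : z₅.1 ≠ x := by simpa using hz₅x
            have hnez₅ : ((x, !δ) : Side V) ≠ z₅ := fun h => hz₅x' (by rw [← h])
            have hcond₅ := cond_of_pair (G := G) (a := y'.1) hmem₅ hz₅ hnez₅ rfl hz₅r'
            have hconde' := cond_of_pair (G := G) (a := y'.1) hsp hy'
              (fun h => h1 h.symm) rfl (myreach_refl _ _)
            have := factS hscx hyV hyx he₅.1 he' hmem₅ hsp hcond₅ hconde'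
            simp at this
      · -- (v, !β) ∈ e'
        have hyu : y' ≠ ((u, !α) : Side V) := by
          intro h
          have hy1 : y'.1 = u := congrArg Prod.fst h
          rcases hPy.1 with hh | hh
          · exact hxu (hy1 ▸ hh).symm
          · exact hh (hy1 ▸ myreach_refl _ _)
        exact hGbound e' he' (Or.inr hsp) y' hy' hyu h2 hPy.2

end Witx

section WitF

open Relation

variable {G : BDGraph V}

/-- A witness in `G` transfers into a separable sign-cut graph. -/
lemma wit_into_F {q : Side V} {u v w : V} {α β γ : Bool}
    (hsG : sepchar G.E u α v β) (hsF : sepchar (FEq G q) u α v β)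
    (hw : myreach (sav G.E (u, !α) (v, !β)) u w) (hwu : w ≠ u) (hwv : w ≠ v)
    (h1 : sepchar G.E u α w γ) (h2 : sepchar G.E w (!γ) v β) :
    myreach (sav (FEq G q) (u, !α) (v, !β)) u w ∧
      sepchar (FEq G q) u α w γ ∧ sepchar (FEq G q) w (!γ) v β := by
  obtain ⟨hne, hGpos, hGbound⟩ := hsG
  obtain ⟨-, hFpos, hFbound⟩ := hsF
  obtain ⟨h1ne, h1pos, h1bound⟩ := h1
  obtain ⟨h2ne, h2pos, h2bound⟩ := h2
  rw [Bool.not_not] at h2pos h2bound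
  have hkgu : kg G q (u, α) := kg_first hFpos hne
  have huvert : u ∈ G.verts := by
    rcases hGpos.cases_head with h | ⟨c, hadj, -⟩
    · exact absurd h hne
    · obtain ⟨e, he, σ, τ, rfl⟩ := hadj
      exact G.wf _ he.1 _ (Sym2.mem_mk_left _ _)
  have hvvert : v ∈ G.verts := by
    rcases (myreach_symm hGpos).cases_head with h | ⟨c, hadj, -⟩
    · exact absurd h.symm hne
    · obtain ⟨e, he, σ, τ, rfl⟩ := hadj
      exact G.wf _ he.1 _ (Sym2.mem_mk_left _ _)
  -- Part 1 : w lies in the sign-cut component of u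
  have hwQf : myreach (sav (FEq G q) (u, !α) (v, !β)) u w := by
    by_contra hnw
    set Qf : Set V := {c | myreach (sav (FEq G q) (u, !α) (v, !β)) u c} with hQfdef
    have huQ : u ∈ Qf := myreach_refl _ _
    rcases gen_exit (A := Qf) hnw (myreach_symm hw) with hL |
        ⟨x, hxQ, e₀, he₀avG, σ, hmemx, z₀, hz₀, hz₀Q, hDr⟩
    · exact absurd huQ (sdel_reach_notmem hL hnw)
    have he₀ : e₀ ∈ G.E := he₀avG.1
    have hn1 : ((u, !α) : Side V) ∉ e₀ := he₀avG.2.1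
    have hn2 : ((v, !β) : Side V) ∉ e₀ := he₀avG.2.2
    have hz₀x : z₀.1 ≠ x := fun h => hz₀Q (h ▸ hxQ)
    have hnepair : ((x, σ) : Side V) ≠ z₀ := fun h => hz₀x (congrArg Prod.fst h).symm
    have hnk : ¬ kg G q (x, σ) := by
      intro hkx
      refine hz₀Q ?_
      have hememF : e₀ ∈ sav (FEq G q) (u, !α) (v, !β) :=
        ⟨mem_FEq_of_kg he₀ hmemx hkx, hn1, hn2⟩
      exact hxQ.tail (myadj_of_pair hememF (pair_of_mem_mem hmemx hz₀ hnepair))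
    have hx1 : ((x, σ) : Side V) ≠ (u, !α) := fun h => hn1 (h ▸ hmemx)
    have hx2 : ((x, σ) : Side V) ≠ (v, !β) := fun h => hn2 (h ▸ hmemx)
    obtain ⟨hxu, hxv, hscx, δ, hδσ, hδkg⟩ := exit_data hne hkgu hxQ hx1 hx2 hnk
    have hσδ : σ = !δ := bool_not_of_ne (Ne.symm hδσ)
    rw [hσδ] at hmemx hnepair
    obtain ⟨e_x, he_x, δ'', hδ''mem, -, -, z_x, hz_x, hz_xx, hz_xr⟩ := lastedge hxQ hxu
    have hδ''δ : δ'' = δ := kuniq hscx (he_x.2 _ hδ''mem) hδkg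
    rw [hδ''δ] at hδ''mem
    have hne_x : ((x, δ) : Side V) ≠ z_x := fun h => hz_xx (by rw [← h])
    have hcond_x : ∀ p ∈ e_x, p.1 = x ∨ myreach (sdel G.E {x}) u p.1 :=
      cond_of_pair (G := G) hδ''mem hz_x hne_x rfl hz_xr
    have he_xG : e_x ∈ G.E := FEq_subset G q he_x
    have hxw : x ≠ w := fun h => hnw (h ▸ hxQ)
    have hDrx : myreach (sdel G.E {x}) w z₀.1 := by
      refine myreach_mono (sdel_mono (sav_subset _ _ _) ?_) hDr
      intro a ha
      exact (show a = x from ha) ▸ hxQ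
    have hnuw : ¬ myreach (sdel G.E {x}) u w := by
      intro huw
      have hcond₀ := cond_of_pair (G := G) (a := u) hmemx hz₀ hnepair rfl
        (myreach_trans huw hDrx)
      have := factS hscx huvert (Ne.symm hxu) he₀ he_xG hmemx hδ''mem hcond₀ hcond_x
      simp at this
    have hnwv : ¬ myreach (sdel G.E {x}) w v := by
      intro hwv'
      rcases gen_exit (A := ({x} : Set V))
          (show v ∉ ({x} : Set V) by simpa using (Ne.symm hxv))
          (myreach_symm hFpos) with hL |
          ⟨x₂, hx₂, e'', he'', s'', hmem'', z'', hz'', hz''x, hz''r⟩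
      · have hvu : myreach (sdel G.E {x}) v u := myreach_mono (sdel_savF_sub _ _) hL
        exact hnuw (myreach_trans (myreach_symm hvu) (myreach_symm hwv'))
      · rw [(hx₂ : x₂ = x)] at hmem''
        have hkg'' : kg G q (x, s'') := (he''.1).2 _ hmem''
        rw [kuniq hscx hkg'' hδkg] at hmem''
        have hnez'' : ((x, δ) : Side V) ≠ z'' := by
          intro h
          refine hz''x ?_
          rw [← h]
          rfl
        have hcond'' := cond_of_pair (G := G) (a := v) hmem'' hz'' hnez'' rfl
          (myreach_mono (sdel_savF_sub _ _) hz''r)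
        have hcond₀ := cond_of_pair (G := G) (a := v) hmemx hz₀ hnepair rfl
          (myreach_trans (myreach_symm hwv') hDrx)
        have := factS hscx hvvert (Ne.symm hxv) he₀ (FEq_subset G q he''.1)
          hmemx hmem'' hcond₀ hcond''
        simp at this
    -- decompose the w-v separating walk at the last visit of w
    rcases gen_exit (A := ({w} : Set V))
        (show v ∉ ({w} : Set V) by simpa using (Ne.symm hwv))
        (myreach_symm h2pos) with hL | ⟨w₂, hw₂, e₂, he₂, s₂, hmem₂, z₂, hz₂, hz₂w, h2r⟩
    · exact absurd (sdel_reach_notmem hL (by simpa using (Ne.symm hwv))) (by simp)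
    rw [(hw₂ : w₂ = w)] at hmem₂
    have hs₂ : s₂ = !γ := by
      refine bool_not_of_ne (fun h => he₂.2.1 ?_)
      rw [← h]
      exact hmem₂
    rw [hs₂] at hmem₂
    have hz₂w' : z₂.1 ≠ w := by simpa using hz₂w
    have hnpr₂ : ((w, !γ) : Side V) ≠ z₂ := fun h => hz₂w' (by rw [← h])
    -- u reaches x in the (u,α)-(w,γ) avoiding graph
    have hux1 : myreach (sav G.E (u, !α) (w, !γ)) u x := by
      rcases gen_exit (A := ({x} : Set V))
          (show u ∉ ({x} : Set V) by simpa using (Ne.symm hxu)) h1pos with hL |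
          ⟨x₃, hx₃, e₃, he₃, s₃, hmem₃, z₃, hz₃, hz₃x, h3r⟩
      · exact absurd (myreach_mono (sdel_mono (sav_subset _ _ _) (fun a ha => ha)) hL)
          hnuw
      · rw [(hx₃ : x₃ = x)] at hmem₃
        have hz₃x' : z₃.1 ≠ x := by simpa using hz₃x
        have hnpr₃ : ((x, s₃) : Side V) ≠ z₃ := fun h => hz₃x' (by rw [← h])
        have hpre : myreach (sav G.E (u, !α) (w, !γ)) u z₃.1 :=
          myreach_mono (sdel_subset _ _) h3r
        exact hpre.tail (myadj_symm _ (myadj_of_pair he₃ (pair_of_mem_mem hmem₃ hz₃ hnpr₃)))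
    by_cases hc₂x : z₂.1 = x
    · -- the first edge of the w-v walk goes directly to x
      refine h1bound e₂ he₂.1 (Or.inr hmem₂) z₂ hz₂ ?_ ?_ ?_
      · intro h
        exact hxu (hc₂x.symm.trans (congrArg Prod.fst h))
      · intro h
        exact hxw (hc₂x.symm.trans (congrArg Prod.fst h))
      · rw [hc₂x]
        exact hux1
    · -- z₂.1 ≠ x : follow the walk to the first visit of x
      have hwc₂ : myreach (sdel G.E {x}) w z₂.1 := by
        refine ReflTransGen.single ?_
        refine myadj_of_pair (y := ((w, !γ) : Side V)) (e := e₂) ⟨he₂.1, ?_⟩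
          (pair_of_mem_mem hmem₂ hz₂ hnpr₂)
        intro p hp
        rw [pair_of_mem_mem hmem₂ hz₂ hnpr₂, Sym2.mem_iff] at hp
        rcases hp with rfl | rfl <;> simpa [Ne.symm hxw]
      rcases gen_exit (A := ({x} : Set V))
          (show z₂.1 ∉ ({x} : Set V) by simpa using hc₂x)
          (myreach_symm h2r) with hL | ⟨x₄, hx₄, e₄, he₄, s₄, hmem₄, z₄, hz₄, hz₄x, h4r⟩
      · have : myreach (sdel G.E {x}) z₂.1 v := by
          refine myreach_mono ?_ hL
          rintro e ⟨⟨⟨heG, -, -⟩, -⟩, hx'⟩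
          exact ⟨heG, hx'⟩
        exact hnwv (myreach_trans hwc₂ this)
      · rw [(hx₄ : x₄ = x)] at hmem₄
        have hcnu : z₂.1 ≠ u := by
          intro h
          exact hnuw (myreach_symm (myreach_trans hwc₂ (h ▸ myreach_refl _ _)))
        rcases gen_exit (A := ({u} : Set V))
            (show z₂.1 ∉ ({u} : Set V) by simpa using hcnu) h4r with hL4 |
            ⟨u₅, hu₅, e₅, he₅, s₅, hmem₅, z₅, hz₅, hz₅u, h5r⟩
        · -- the inner walk avoids u, w, x entirely
          have hz₄u : z₄.1 ≠ u := by
            intro h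
            have hmono : myreach (sdel G.E {x}) z₂.1 z₄.1 := by
              refine myreach_mono ?_ h4r
              rintro e ⟨⟨⟨heG, -, -⟩, -⟩, hx'⟩
              exact ⟨heG, hx'⟩
            exact hnuw (myreach_symm (myreach_trans hwc₂ (h ▸ hmono)))
          have hz₄w : z₄.1 ≠ w := by simpa using he₄.2 _ hz₄
          have hz₄x' : z₄.1 ≠ x := by simpa using hz₄x
          have hnpr₄ : ((x, s₄) : Side V) ≠ z₄ := fun h => hz₄x' (by rw [← h])
          have he₄' : e₄ ∈ sav G.E (u, !α) (w, !γ) := by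
            refine ⟨he₄.1.1, ?_, ?_⟩ <;> intro hp <;>
              rw [pair_of_mem_mem hmem₄ hz₄ hnpr₄, Sym2.mem_iff] at hp <;>
              rcases hp with h | h
            · exact Ne.symm hxu (congrArg Prod.fst h)
            · exact hz₄u (congrArg Prod.fst h).symm
            · exact Ne.symm hxw (congrArg Prod.fst h)
            · exact hz₄w (congrArg Prod.fst h).symm
          have hsub4 : sdel (sdel (sdel (sav G.E (w, γ) (v, !β)) {w}) {x}) {u} ⊆
              sav G.E (u, !α) (w, !γ) := by
            rintro e ⟨⟨⟨⟨heG, -, -⟩, hw'⟩, -⟩, hu'⟩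
            exact ⟨heG, fun hmem => (hu' _ hmem) rfl, fun hmem => (hw' _ hmem) rfl⟩
          have hxc₂ : myreach (sav G.E (u, !α) (w, !γ)) x z₂.1 := by
            refine ReflTransGen.head ?_ (myreach_symm (myreach_mono hsub4 hL4))
            exact myadj_of_pair (y := ((x, s₄) : Side V)) he₄'
              (pair_of_mem_mem hmem₄ hz₄ hnpr₄)
          refine h1bound e₂ he₂.1 (Or.inr hmem₂) z₂ hz₂ ?_ ?_
            (myreach_trans hux1 hxc₂)
          · intro h
            exact hcnu (congrArg Prod.fst h)
          · intro h
            exact hz₂w' (congrArg Prod.fst h)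
        · -- the inner walk hits u : contradiction with hnuw
          rw [(hu₅ : u₅ = u)] at hmem₅
          have hz₅u' : z₅.1 ≠ u := by simpa using hz₅u
          have hnpr₅ : ((u, s₅) : Side V) ≠ z₅ := fun h => hz₅u' (by rw [← h])
          have he₅x : e₅ ∈ sdel G.E {x} := by
            refine ⟨he₅.1.1.1, ?_⟩
            exact he₅.2
          have hadjj : myadj (sdel G.E {x}) u z₅.1 :=
            myadj_of_pair he₅x (pair_of_mem_mem hmem₅ hz₅ hnpr₅)
          have hc₂u : myreach (sdel G.E {x}) z₂.1 u := by
            refine ReflTransGen.tail ?_ (myadj_symm _ hadjj)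
            refine myreach_mono ?_ h5r
            rintro e ⟨⟨⟨⟨heG, -, -⟩, -⟩, hx'⟩, -⟩
            exact ⟨heG, hx'⟩
          exact hnuw (myreach_symm (myreach_trans hwc₂ hc₂u))
  refine ⟨hwQf, ?_, ?_⟩
  · -- Part 2 : sepchar (FEq G q) u α w γ
    refine ⟨h1ne, ?_, ?_⟩
    · rcases gen_exit (A := ({w} : Set V))
          (show u ∉ ({w} : Set V) by simpa using h1ne) hwQf with hL |
          ⟨w₆, hw₆, e_L, he_L, s_L, hmemL, z_L, hz_L, hz_Lw, hpre⟩
      · exact absurd (sdel_reach_notmem hL (by simpa using h1ne)) (by simp)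
      rw [(hw₆ : w₆ = w)] at hmemL
      have hz_Lw' : z_L.1 ≠ w := by simpa using hz_Lw
      have hnprL : ((w, s_L) : Side V) ≠ z_L := fun h => hz_Lw' (by rw [← h])
      by_cases hsL : s_L = !γ
      · exfalso
        rw [hsL] at hmemL
        have hpre' : myreach (sav G.E (u, !α) (w, !γ)) u z_L.1 := by
          refine myreach_mono ?_ hpre
          rintro e ⟨⟨heF, hn1', hn2'⟩, hww⟩
          exact ⟨FEq_subset G q heF, hn1', fun hmem => (hww _ hmem) rfl⟩
        refine h1bound e_L (FEq_subset G q he_L.1) (Or.inr hmemL) z_L hz_L ?_ ?_ hpre'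
        · intro h
          exact he_L.2.1 (h ▸ hz_L)
        · intro h
          exact hz_Lw' (congrArg Prod.fst h)
      · have hsLγ : s_L = γ := bool_eq_of_ne_not hsL
        rw [hsLγ] at hmemL hnprL
        have hpre'' : myreach (sav (FEq G q) (u, !α) (w, !γ)) u z_L.1 := by
          refine myreach_mono ?_ hpre
          rintro e ⟨⟨heF, hn1', hn2'⟩, hww⟩
          exact ⟨heF, hn1', fun hmem => (hww _ hmem) rfl⟩
        have heL' : e_L ∈ sav (FEq G q) (u, !α) (w, !γ) := by
          refine ⟨he_L.1, he_L.2.1, ?_⟩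
          intro hp
          rw [pair_of_mem_mem hmemL hz_L hnprL, Sym2.mem_iff] at hp
          rcases hp with h | h
          · have := congrArg Prod.snd h
            simp at this
          · exact hz_Lw' (congrArg Prod.fst h).symm
        exact hpre''.tail
          (myadj_symm _ (myadj_of_pair heL' (pair_of_mem_mem hmemL hz_L hnprL)))
    · intro e he hsplit y hy hy1 hy2 hr
      refine h1bound e (FEq_subset G q he) hsplit y hy hy1 hy2 ?_
      exact myreach_mono (sav_mono (FEq_subset G q) _ _) hr
  · -- Part 3 : sepchar (FEq G q) w (!γ) v β
    unfold sepchar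
    rw [Bool.not_not]
    refine ⟨hwv, ?_, ?_⟩
    · have hwvF : myreach (sav (FEq G q) (u, !α) (v, !β)) w v :=
        myreach_trans (myreach_symm hwQf) hFpos
      rcases gen_exit (A := ({w} : Set V))
          (show v ∉ ({w} : Set V) by simpa using (Ne.symm hwv)) (myreach_symm hwvF)
          with hL | ⟨w₇, hw₇, e_M, he_M, s_M, hmemM, z_M, hz_M, hz_Mw, hpreM⟩
      · exact absurd (sdel_reach_notmem hL (by simpa using (Ne.symm hwv))) (by simp)
      rw [(hw₇ : w₇ = w)] at hmemM
      have hz_Mw' : z_M.1 ≠ w := by simpa using hz_Mw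
      have hnprM : ((w, s_M) : Side V) ≠ z_M := fun h => hz_Mw' (by rw [← h])
      by_cases hsM : s_M = γ
      · exfalso
        rw [hsM] at hmemM
        have hpreM' : myreach (sav G.E (w, γ) (v, !β)) w z_M.1 := by
          refine myreach_trans h2pos ?_
          refine myreach_mono ?_ hpreM
          rintro e ⟨⟨heF, hn1', hn2'⟩, hww⟩
          exact ⟨FEq_subset G q heF, fun hmem => (hww _ hmem) rfl, hn2'⟩
        refine h2bound e_M (FEq_subset G q he_M.1) (Or.inl hmemM) z_M hz_M ?_ ?_ hpreM'
        · intro h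
          exact hz_Mw' (congrArg Prod.fst h)
        · intro h
          exact he_M.2.2 (h ▸ hz_M)
      · have hsM' : s_M = !γ := bool_not_of_ne hsM
        rw [hsM'] at hmemM hnprM
        have hpreM'' : myreach (sav (FEq G q) (w, γ) (v, !β)) v z_M.1 := by
          refine myreach_mono ?_ hpreM
          rintro e ⟨⟨heF, hn1', hn2'⟩, hww⟩
          exact ⟨heF, fun hmem => (hww _ hmem) rfl, hn2'⟩
        have heM' : e_M ∈ sav (FEq G q) (w, γ) (v, !β) := by
          refine ⟨he_M.1, ?_, he_M.2.2⟩
          intro hp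
          rw [pair_of_mem_mem hmemM hz_M hnprM, Sym2.mem_iff] at hp
          rcases hp with h | h
          · have := congrArg Prod.snd h
            simp at this
          · exact hz_Mw' (congrArg Prod.fst h).symm
        refine ReflTransGen.head ?_ (myreach_symm hpreM'')
        exact myadj_of_pair (y := ((w, !γ) : Side V)) heM'
          (pair_of_mem_mem hmemM hz_M hnprM)
    · intro e he hsplit y hy hy1 hy2 hr
      refine h2bound e (FEq_subset G q he) hsplit y hy hy1 hy2 ?_
      exact myreach_mono (sav_mono (FEq_subset G q) _ _) hr

end WitF
/-- `{u α, v β}` is a snarl of `G` iff there is a sign-cut graph `F`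
of `G` such that `{u α, v β}` is a snarl of `F`. -/
theorem statement_11 (G : BDGraph V) (u v : V) (α β : Bool) :
    IsSnarl G u α v β ↔ ∃ F : BDGraph V, IsSignCutGraph G F ∧ IsSnarl F u α v β := by
  constructor
  · rintro ⟨hsepG, hmin⟩
    rw [sep_iff] at hsepG
    obtain ⟨hne, hpos, hbound⟩ := hsepG
    have huvert : u ∈ G.verts := by
      rcases hpos.cases_head with h | ⟨c, hadj, -⟩
      · exact absurd h hne
      · obtain ⟨e, he, σ, τ, rfl⟩ := hadj
        exact G.wf _ he.1 _ (Sym2.mem_mk_left _ _)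
    have hp₀v : scKey G (u, α) ∈ G.splitAll.verts := by
      refine ⟨?_, scKey_idem G _⟩
      rw [scKey_fst]
      exact huvert
    have hkg : kg G (scKey G (u, α)) (u, α) := myreach_refl _ _
    set q := scKey G (u, α) with hq
    have hwfF : ∀ e ∈ FEq G q, ∀ y ∈ e, Prod.fst y ∈
        {w : V | ∃ σ : Bool, (w, σ) ∈ G.splitAll.verts ∧ G.splitAll.uReach q (w, σ)} := by
      rintro e ⟨he, hall⟩ y hy
      refine ⟨(scKey G y).2, ?_⟩
      have hkey : ((y.1, (scKey G y).2) : Side V) = scKey G y := by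
        rw [← scKey_fst G y]
      rw [hkey]
      exact ⟨⟨by rw [scKey_fst]; exact G.wf e he y hy, scKey_idem G y⟩, hall y hy⟩
    set F : BDGraph V :=
      ⟨{w : V | ∃ σ : Bool, (w, σ) ∈ G.splitAll.verts ∧ G.splitAll.uReach q (w, σ)},
        FEq G q, hwfF⟩ with hF
    have hFE : F.E = FEq G q := rfl
    have hsG : sepchar G.E u α v β := ⟨hne, hpos, hbound⟩
    -- F is separable for the pair
    have hFpos : myreach (sav (FEq G q) (u, !α) (v, !β)) u v := by
      by_contra hnp
      obtain ⟨x, δ, hxreach, hxu, hxv, hs1, hs2⟩ := witx hkg hsG hnp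
      exact hmin ⟨x, (snarlVerts_iff G hsG).mpr hxreach, hxu, hxv, δ,
        (sep_iff G u α x δ).mpr hs1, (sep_iff G x (!δ) v β).mpr hs2⟩
    have hFbound : ∀ e ∈ FEq G q, ((u, !α) ∈ e ∨ (v, !β) ∈ e) → ∀ y ∈ e,
        y ≠ (u, !α) → y ≠ (v, !β) → ¬ myreach (sav (FEq G q) (u, !α) (v, !β)) u y.1 := by
      intro e he hsplit y hy h1 h2 hreach
      exact hbound e (FEq_subset G q he) hsplit y hy h1 h2
        (myreach_mono (sav_mono (FEq_subset G q) _ _) hreach)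
    have hsF : sepchar (FEq G q) u α v β := ⟨hne, hFpos, hFbound⟩
    refine ⟨F, ⟨q, hp₀v, rfl, rfl⟩, (sep_iff F u α v β).mpr hsF, ?_⟩
    rintro ⟨w, hwSV, hwu, hwv, γ, hsep1F, hsep2F⟩
    rw [sep_iff] at hsep1F hsep2F
    have hG1 : sepchar G.E u α w γ := sep_up hsep1F
    have hG2 : sepchar G.E w (!γ) v β := sep_up hsep2F
    have hwG : myreach (sav G.E (u, !α) (v, !β)) u w :=
      myreach_mono (sav_mono (FEq_subset G q) _ _) ((snarlVerts_iff F hsF).mp hwSV)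
    exact hmin ⟨w, (snarlVerts_iff G hsG).mpr hwG, hwu, hwv, γ,
      (sep_iff G u α w γ).mpr hG1, (sep_iff G w (!γ) v β).mpr hG2⟩
  · rintro ⟨F, ⟨q, hqv, hFverts, hFE⟩, hsnF⟩
    obtain ⟨hsepF, hminF⟩ := hsnF
    rw [sep_iff, hFE] at hsepF
    have hsF : sepchar (FEq G q) u α v β := hsepF
    have hsG : sepchar G.E u α v β := sep_up hsF
    refine ⟨(sep_iff G u α v β).mpr hsG, ?_⟩
    rintro ⟨w, hwSV, hwu, hwv, γ, h1, h2⟩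
    rw [sep_iff] at h1 h2
    obtain ⟨hwQf, hF1, hF2⟩ := wit_into_F hsG hsF ((snarlVerts_iff G hsG).mp hwSV)
      hwu hwv h1 h2
    have hsepFE : sepchar F.E u α v β := by rw [hFE]; exact hsF
    refine hminF ⟨w, (snarlVerts_iff F hsepFE).mpr ?_, hwu, hwv, γ,
      (sep_iff F u α w γ).mpr ?_, (sep_iff F w (!γ) v β).mpr ?_⟩ <;> rw [hFE]
    · exact hwQf
    · exact hF1
    · exact hF2

end Paper
end

section
/- Let G be a bidirected graph and let uα and vβ be vertex-sides of G such that {uα, vβ} is separable with snarl component X. If X contains two internally vertex-disjoint undirected u-v paths, then {uα, vβ} is a snarl of G. -/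
/-!
Bidirected graphs.  A vertex-side is a vertex with a sign (`true` = `+`, `false` = `−`);
a bidirected edge is an unordered pair of vertex-sides (an element of `Sym2 (V × Bool)`).
-/

namespace Paper

variable {V : Type}

/-- Adjacency inside the snarl component `X` of `{u α, v β}` (via the edges of `X`). -/
noncomputable def XAdj (G : BDGraph V) (u : V) (α : Bool) (v : V) (β : Bool)
    (a b : V) : Prop :=
  ∃ e ∈ SnarlEdges G u α v β, ∃ σ τ : Bool, e = s((a, σ), (b, τ))

/-- `p` is an undirected path from `a` to `b` inside the snarl component of
`{u α, v β}`. -/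
noncomputable def IsUPathX (G : BDGraph V) (u : V) (α : Bool) (v : V) (β : Bool)
    (p : List V) (a b : V) : Prop :=
  p.Chain' (XAdj G u α v β) ∧ p.head? = some a ∧ p.getLast? = some b ∧ p.Nodup

/-! ### Auxiliary lemmas for Statement 14 -/

lemma aux_uadj_symm (G : BDGraph V) {a b : V} (h : G.uadj a b) : G.uadj b a := by
  obtain ⟨e, he, σ, τ, rfl⟩ := h
  exact ⟨_, he, τ, σ, Sym2.eq_swap⟩

lemma aux_uReach_symm (G : BDGraph V) {a b : V} (h : G.uReach a b) : G.uReach b a :=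
  by
    haveI : Std.Symm G.uadj := ⟨fun _ _ h => aux_uadj_symm G h⟩
    exact Relation.ReflTransGen.symmetric.symm _ _ h

/-- Edges of the snarl component incident to `u` carry the sign `α` at `u`. -/
lemma snarl_side_u {G : BDGraph V} {u v : V} {α β : Bool}
    (hsep : Separable G u α v β) {e : Sym2 (Side V)}
    (he : e ∈ SnarlEdges G u α v β) {σ : Bool} (hmem : ((u, σ) : Side V) ∈ e) :
    σ = α := by
  by_contra h
  have hσ : σ = !α := by cases σ <;> cases α <;> simp_all
  subst hσ
  have h2 := he.2 (u, !α) hmem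
  simp only [splitMap, if_pos rfl] at h2
  exact hsep.2.2.1 h2

/-- Edges of the snarl component incident to `v` carry the sign `β` at `v`. -/
lemma snarl_side_v {G : BDGraph V} {u v : V} {α β : Bool}
    (hsep : Separable G u α v β) {e : Sym2 (Side V)}
    (he : e ∈ SnarlEdges G u α v β) {σ : Bool} (hmem : ((v, σ) : Side V) ∈ e) :
    σ = β := by
  by_contra h
  have hσ : σ = !β := by cases σ <;> cases β <;> simp_all
  subst hσ
  have h2 := he.2 (v, !β) hmem
  have hvu : ((v, !β) : Side V) ≠ (u, !α) := by
    intro hh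
    exact hsep.1 (congrArg Prod.fst hh).symm
  simp only [splitMap, if_neg hvu, if_pos rfl] at h2
  exact hsep.2.2.2.1 h2

lemma splitMap_inl {u v : V} {α β : Bool} {y : Side V} {x : V ⊕ V} {ζ : Bool}
    (h : splitMap u α v β y = (x, ζ)) (h1 : x ≠ Sum.inr u) (h2 : x ≠ Sum.inr v) :
    x = Sum.inl y.1 ∧ ζ = y.2 := by
  simp only [splitMap] at h
  split at h
  · exact absurd (congrArg Prod.fst h).symm h1
  · split at h
    · exact absurd (congrArg Prod.fst h).symm h2
    · exact ⟨(congrArg Prod.fst h).symm, (congrArg Prod.snd h).symm⟩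

/-- Reachability from `Sum.inl u` in the split graph lands in `Sum.inl` of the snarl
component, and pulls back to reachability via `XAdj`. -/
lemma reach_inl {G : BDGraph V} {u v : V} {α β : Bool}
    (hsep : Separable G u α v β) :
    ∀ z, (G.split2 u α v β).uReach (Sum.inl u) z →
      ∃ x, z = Sum.inl x ∧ Relation.ReflTransGen (XAdj G u α v β) u x := by
  intro z h
  induction h with
  | refl => exact ⟨u, rfl, .refl⟩
  | @tail b c hab hbc ih =>
    obtain ⟨x0, rfl, hR⟩ := ih
    obtain ⟨e', he', σ, τ, heq⟩ := hbc
    obtain ⟨e, he, rfl⟩ := he'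
    have hreachc : (G.split2 u α v β).uReach (Sum.inl u) c :=
      hab.tail ⟨_, ⟨e, he, rfl⟩, σ, τ, heq⟩
    -- e is in the snarl component
    have heX : e ∈ SnarlEdges G u α v β := by
      refine ⟨he, fun y hy => ?_⟩
      have hmem : splitMap u α v β y ∈ Sym2.map (splitMap u α v β) e :=
        Sym2.mem_map.mpr ⟨y, hy, rfl⟩
      rw [heq] at hmem
      rcases Sym2.mem_iff.mp hmem with h1 | h1
      · rw [h1]; exact hab
      · rw [h1]; exact hreachc
    have hcu : c ≠ Sum.inr u := fun hh => hsep.2.2.1 (hh ▸ hreachc)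
    have hcv : c ≠ Sum.inr v := fun hh => hsep.2.2.2.1 (hh ▸ hreachc)
    obtain ⟨⟨a, b'⟩, rfl⟩ := Quot.exists_rep e
    rw [Sym2.map_pair_eq, Sym2.eq_iff] at heq
    rcases heq with ⟨ha, hb⟩ | ⟨ha, hb⟩
    · -- splitMap a = (inl x0, σ), splitMap b' = (c, τ)
      obtain ⟨ha1, -⟩ := splitMap_inl ha (by simp) (by simp)
      obtain ⟨hb1, -⟩ := splitMap_inl hb hcu hcv
      refine ⟨b'.1, hb1, hR.tail ?_⟩
      refine ⟨s(a, b'), heX, a.2, b'.2, ?_⟩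
      have : a.1 = x0 := Sum.inl.inj ha1.symm
      rw [← this]
    · obtain ⟨ha1, -⟩ := splitMap_inl ha hcu hcv
      obtain ⟨hb1, -⟩ := splitMap_inl hb (by simp) (by simp)
      refine ⟨a.1, ha1, hR.tail ?_⟩
      refine ⟨s(a, b'), heX, b'.2, a.2, ?_⟩
      have : b'.1 = x0 := Sum.inl.inj hb1.symm
      rw [← this]
      exact Sym2.eq_swap

/-- Extract the first arrival at `w` from a reachability witness. -/
lemma first_hit {r : V → V → Prop} {u w : V} (h : Relation.ReflTransGen r u w) :
    u = w ∨ ∃ x, x ≠ w ∧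
      Relation.ReflTransGen (fun a b => r a b ∧ a ≠ w ∧ b ≠ w) u x ∧ r x w := by
  induction h using Relation.ReflTransGen.head_induction_on with
  | refl => exact Or.inl rfl
  | @head a c h' h ih =>
    by_cases ha : a = w
    · exact Or.inl ha
    by_cases hc : c = w
    · exact Or.inr ⟨a, ha, .refl, hc ▸ h'⟩
    rcases ih with rfl | ⟨x, hx, hRx, hrw⟩
    · exact absurd rfl hc
    · exact Or.inr ⟨x, hx, .head ⟨h', ha, hc⟩ hRx, hrw⟩

/-- One `X`-edge maps to an edge of a split graph between `Sum.inl` copies, provided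
its sides avoid the two detached vertex-sides. -/
lemma split2_uadj {G : BDGraph V} {c d : V} {δ ε : Bool} {a b : V} {σ τ : Bool}
    {e : Sym2 (Side V)} (he : e ∈ G.E) (heq : e = s((a, σ), (b, τ)))
    (ha : ((a, σ) : Side V) ≠ (c, !δ)) (ha' : ((a, σ) : Side V) ≠ (d, !ε))
    (hb : ((b, τ) : Side V) ≠ (c, !δ)) (hb' : ((b, τ) : Side V) ≠ (d, !ε)) :
    (G.split2 c δ d ε).uadj (Sum.inl a) (Sum.inl b) := by
  refine ⟨Sym2.map (splitMap c δ d ε) e, ⟨e, he, rfl⟩, σ, τ, ?_⟩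
  subst heq
  rw [Sym2.map_pair_eq]
  simp only [splitMap, if_neg ha, if_neg ha', if_neg hb, if_neg hb']

/-- An edge whose second side is the detached side `(c, !δ)` maps to an edge
reaching the new vertex `Sum.inr c`. -/
lemma split2_uadj_inr1 {G : BDGraph V} {c d : V} {δ ε : Bool} {a : V} {σ : Bool}
    {e : Sym2 (Side V)} (he : e ∈ G.E) (heq : e = s((a, σ), (c, !δ)))
    (ha : ((a, σ) : Side V) ≠ (c, !δ)) (ha' : ((a, σ) : Side V) ≠ (d, !ε)) :
    (G.split2 c δ d ε).uadj (Sum.inl a) (Sum.inr c) := by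
  refine ⟨Sym2.map (splitMap c δ d ε) e, ⟨e, he, rfl⟩, σ, !δ, ?_⟩
  subst heq
  rw [Sym2.map_pair_eq]
  simp only [splitMap, if_neg ha, if_neg ha']
  simp

/-- Same, with the detached side `(d, !ε)` of the second split vertex. -/
lemma split2_uadj_inr2 {G : BDGraph V} {c d : V} {δ ε : Bool} {a : V} {σ : Bool}
    {e : Sym2 (Side V)} (he : e ∈ G.E) (heq : e = s((a, σ), (d, !ε)))
    (ha : ((a, σ) : Side V) ≠ (c, !δ)) (ha' : ((a, σ) : Side V) ≠ (d, !ε))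
    (hdc : ((d, !ε) : Side V) ≠ (c, !δ)) :
    (G.split2 c δ d ε).uadj (Sum.inl a) (Sum.inr d) := by
  refine ⟨Sym2.map (splitMap c δ d ε) e, ⟨e, he, rfl⟩, σ, !ε, ?_⟩
  subst heq
  rw [Sym2.map_pair_eq]
  simp only [splitMap, if_neg ha, if_neg ha', if_neg hdc]
  simp

/-- Mapping a `w`-avoiding walk of the snarl component into a split graph. -/
lemma reach_map {G : BDGraph V} {u v : V} {α β : Bool} {w c d : V} {δ ε : Bool}
    (Hside : ∀ e ∈ SnarlEdges G u α v β, ∀ y : Side V, y ∈ e → y.1 ≠ w →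
      y ≠ ((c, !δ) : Side V) ∧ y ≠ ((d, !ε) : Side V))
    {a x : V}
    (h : Relation.ReflTransGen
      (fun a b => XAdj G u α v β a b ∧ a ≠ w ∧ b ≠ w) a x) :
    (G.split2 c δ d ε).uReach (Sum.inl a) (Sum.inl x) := by
  induction h with
  | refl => exact .refl
  | @tail b' c' hab hbc ih =>
    obtain ⟨⟨e, heX, σ, τ, heq⟩, hbw, hcw⟩ := hbc
    have hm1 : ((b', σ) : Side V) ∈ e := by rw [heq]; exact Sym2.mem_mk_left _ _
    have hm2 : ((c', τ) : Side V) ∈ e := by rw [heq]; exact Sym2.mem_mk_right _ _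
    obtain ⟨h1, h1'⟩ := Hside e heX _ hm1 hbw
    obtain ⟨h2, h2'⟩ := Hside e heX _ hm2 hcw
    exact ih.tail (split2_uadj heX.1 heq h1 h1' h2 h2')

lemma chain_restrict {r : V → V → Prop} {w : V} :
    ∀ {l : List V}, l.Chain' r → (∀ x ∈ l, x ≠ w) →
      l.Chain' (fun a b => r a b ∧ a ≠ w ∧ b ≠ w) := by
  intro l
  induction l with
  | nil => intro _ _; exact List.isChain_nil
  | cons a t ih =>
    intro hch hmem
    cases t with
    | nil => exact List.isChain_singleton _
    | cons b t' =>
      simp only [List.Chain', List.isChain_cons_cons] at hch ⊢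
      exact ⟨⟨hch.1, hmem a (by simp), hmem b (by simp)⟩,
        ih hch.2 (fun x hx => hmem x (List.mem_cons_of_mem _ hx))⟩

lemma chain_reach {r : V → V → Prop} :
    ∀ (l : List V) (a b : V), l.Chain' r → l.head? = some a → l.getLast? = some b →
      Relation.ReflTransGen r a b := by
  intro l
  induction l with
  | nil => intro a b _ h; simp at h
  | cons x t ih =>
    intro a b hch hh hl
    have hxa : x = a := by simpa using hh
    subst hxa
    cases t with
    | nil =>
      have : b = x := by simpa using hl.symm
      subst this
      exact .refl
    | cons y t' =>
      simp only [List.Chain', List.isChain_cons_cons] at hch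
      rw [List.getLast?_cons_cons] at hl
      exact .head hch.1 (ih y b hch.2 rfl hl)

/-- If `{u α, v β}` is separable with snarl component `X`, and `X`
contains two internally vertex-disjoint undirected `u`-`v` paths, then `{u α, v β}`
is a snarl of `G`. -/
theorem statement_14 (G : BDGraph V) (u v : V) (α β : Bool)
    (hsep : Separable G u α v β)
    (hpaths : ∃ p q : List V, IsUPathX G u α v β p u v ∧ IsUPathX G u α v β q u v ∧
        ∀ w, w ∈ p → w ∈ q → w = u ∨ w = v) :
    IsSnarl G u α v β := by
  refine ⟨hsep, ?_⟩
  rintro ⟨w, hwX, hwu, hwv, γ, hs1, hs2⟩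
  -- a path avoiding w
  obtain ⟨p, q, hp, hq, hdisj⟩ := hpaths
  have hq0 : ∃ q0 : List V, IsUPathX G u α v β q0 u v ∧ ∀ x ∈ q0, x ≠ w := by
    by_cases hwp : w ∈ p
    · refine ⟨q, hq, fun x hx hxw => ?_⟩
      subst hxw
      rcases hdisj x hwp hx with rfl | rfl
      · exact hwu rfl
      · exact hwv rfl
    · exact ⟨p, hp, fun x hx hxw => hwp (hxw ▸ hx)⟩
  obtain ⟨q0, ⟨hq0c, hq0h, hq0l, -⟩, hq0w⟩ := hq0
  -- pull back reachability to X
  have hwX' : (G.split2 u α v β).uReach (Sum.inl u) (Sum.inl w) := hwX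
  obtain ⟨x0, hx0, hRuw⟩ := reach_inl hsep _ hwX'
  have hx0w : w = x0 := Sum.inl.inj hx0
  subst hx0w
  rcases first_hit hRuw with rfl | ⟨x, hxw, hRux, hXxw⟩
  · exact hwu rfl
  obtain ⟨e, heX, σ, τ, heq⟩ := hXxw
  -- side conditions for the two split graphs
  have hside1 : ∀ e ∈ SnarlEdges G u α v β, ∀ y : Side V, y ∈ e → y.1 ≠ w →
      y ≠ ((u, !α) : Side V) ∧ y ≠ ((w, !γ) : Side V) := by
    intro e' he' y hy hyw
    constructor
    · intro hh
      have : (!α) = α := snarl_side_u hsep he' (hh ▸ hy)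
      simp at this
    · intro hh
      exact hyw (congrArg Prod.fst hh)
  have hside2 : ∀ e ∈ SnarlEdges G u α v β, ∀ y : Side V, y ∈ e → y.1 ≠ w →
      y ≠ ((w, !(!γ)) : Side V) ∧ y ≠ ((v, !β) : Side V) := by
    intro e' he' y hy hyw
    constructor
    · intro hh
      exact hyw (congrArg Prod.fst hh)
    · intro hh
      have : (!β) = β := snarl_side_v hsep he' (hh ▸ hy)
      simp at this
  have hxσ1 : ((x, σ) : Side V) ≠ (u, !α) := by
    intro hh
    have hxu : x = u := congrArg Prod.fst hh
    have hσ : σ = !α := congrArg Prod.snd hh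
    have : σ = α := snarl_side_u hsep heX (by rw [heq, ← hxu]; exact Sym2.mem_mk_left _ _)
    rw [hσ] at this; simp at this
  have hxσv : ((x, σ) : Side V) ≠ (v, !β) := by
    intro hh
    have hxv : x = v := congrArg Prod.fst hh
    have hσ : σ = !β := congrArg Prod.snd hh
    have : σ = β := snarl_side_v hsep heX (by rw [heq, ← hxv]; exact Sym2.mem_mk_left _ _)
    rw [hσ] at this; simp at this
  have hxσw : ∀ ζ : Bool, ((x, σ) : Side V) ≠ (w, ζ) := by
    intro ζ hh
    exact hxw (congrArg Prod.fst hh)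
  by_cases hτ : τ = γ
  · -- case τ = γ : contradict Separable G w (!γ) v β
    rw [hτ] at heq
    have hA : (G.split2 w (!γ) v β).uReach (Sum.inl u) (Sum.inl x) :=
      reach_map hside2 hRux
    have hB : (G.split2 w (!γ) v β).uadj (Sum.inl x) (Sum.inr w) := by
      refine split2_uadj_inr1 heX.1 ?_ (hxσw _) hxσv
      rw [heq, Bool.not_not]
    have hC : (G.split2 w (!γ) v β).uReach (Sum.inl u) (Sum.inl v) := by
      refine reach_map hside2 (chain_reach q0 u v ?_ hq0h hq0l)
      exact chain_restrict hq0c hq0w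
    exact hs2.2.2.2.2.1 ((aux_uReach_symm _ hC).trans (hA.tail hB))
  · -- remaining: τ = !γ : contradict Separable G u α w γ
    have hτ' : τ = !γ := by cases τ <;> cases γ <;> simp_all
    have hA : (G.split2 u α w γ).uReach (Sum.inl u) (Sum.inl x) :=
      reach_map hside1 hRux
    have hB : (G.split2 u α w γ).uadj (Sum.inl x) (Sum.inr w) := by
      refine split2_uadj_inr2 heX.1 ?_ hxσ1 (hxσw _) ?_
      · rw [heq, hτ']
      · intro hh
        exact hwu (congrArg Prod.fst hh)
    exact hs1.2.2.2.1 (hA.tail hB)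

end Paper
end

section
/- Let G be a bidirected graph, let u,v ∈ V(G) be vertices, and let α, β ∈ {+,−}. If G has a bidirected path starting at the vertex-side uα and ending at the vertex-side vβ, and also a bidirected path starting at the vertex-side uα̂ and ending at v, then G contains a cycloid. -/
/-!
Bidirected graphs.  A vertex-side is a vertex with a sign (`true` = `+`, `false` = `−`);
a bidirected edge is an unordered pair of vertex-sides (an element of `Sym2 (V × Bool)`).
-/

namespace Paper

variable {V : Type}

/-- If `G` has a `u α`-`v β` bidirected path and also a `u !α`-`v`
bidirected path (arrival sign at `v` unconstrained), then `G` contains a cycloid. -/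
theorem statement_15 (G : BDGraph V) (u v : V) (α β : Bool)
    (h1 : ∃ p : List (Side V), IsBPath G p u α v β)
    (h2 : ∃ q : List (Side V), ∃ γ : Bool, IsBPath G q u (!α) v γ) :
    HasCycloid G := by
  classical
  obtain ⟨P, ⟨hPlen, hPchain⟩, hPhead, hPlast, hPnodup⟩ := h1
  obtain ⟨Q, γ, ⟨hQlen, hQchain⟩, hQhead, hQlast, hQnodup⟩ := h2
  have hPne : P ≠ [] := by intro h; subst h; simp at hPlen
  set S : List V := P.map Prod.fst with hS
  -- decompose Q as (u, !α) :: Qt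
  obtain ⟨Qt, rfl⟩ : ∃ Qt, Q = (u, !α) :: Qt := by
    cases Q with
    | nil => simp at hQhead
    | cons a t =>
      simp only [List.head?_cons, Option.some.injEq] at hQhead
      exact ⟨t, by rw [hQhead]⟩
  have hQt : Qt ≠ [] := by
    intro h; subst h; simp at hQlen
  -- split Qt at the first side whose vertex lies on P
  set pr : Side V → Bool := fun x => decide (x.1 ∉ S) with hpr
  set A := Qt.takeWhile pr with hA
  set R := Qt.dropWhile pr with hRdef
  have hQtAR : A ++ R = Qt := List.takeWhile_append_dropWhile
  have hvS : v ∈ S := by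
    have h1 : P.getLast hPne = (v, !β) := by
      have := List.getLast?_eq_getLast hPne
      rw [hPlast] at this
      exact (Option.some_inj.mp this).symm
    have h2 : (v, !β) ∈ P := h1 ▸ List.getLast_mem hPne
    exact List.mem_map_of_mem (f := Prod.fst) h2
  have hRne : R ≠ [] := by
    intro h
    have hall := List.dropWhile_eq_nil_iff.mp (hRdef ▸ h)
    have hlastQt : Qt.getLast hQt = (v, !γ) := by
      have e1 : ((u, !α) :: Qt).getLast? = some (Qt.getLast hQt) := by
        rw [List.getLast?_eq_getLast (List.cons_ne_nil _ _), List.getLast_cons hQt]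
      rw [hQlast] at e1
      exact (Option.some_inj.mp e1).symm
    have := hall _ (List.getLast_mem hQt)
    rw [hlastQt] at this
    simp [pr, hvS] at this
  set w := R.head hRne with hw
  have hwS : w.1 ∈ S := by
    have := List.head_dropWhile_not pr (l := Qt) (hRdef ▸ hRne)
    have h2 : pr w = false := by
      rw [hw]; exact this
    simpa [pr] using h2
  have hAmem : ∀ a ∈ A, a.1 ∉ S := by
    intro a ha
    have := List.mem_takeWhile_imp (hA ▸ ha)
    simpa [pr] using this
  -- split P at the first side whose vertex is w.1
  set pr2 : Side V → Bool := fun x => decide (x.1 ≠ w.1) with hpr2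
  set C := P.takeWhile pr2 with hC
  set Rp := P.dropWhile pr2 with hRpdef
  have hPCD : C ++ Rp = P := List.takeWhile_append_dropWhile
  have hRpne : Rp ≠ [] := by
    intro h
    have hall := List.dropWhile_eq_nil_iff.mp (hRpdef ▸ h)
    obtain ⟨x, hxP, hx1⟩ := List.mem_map.mp hwS
    have := hall x hxP
    simp [pr2, hx1] at this
  set x₀ := Rp.head hRpne with hx0
  have hx0w : x₀.1 = w.1 := by
    have := List.head_dropWhile_not pr2 (l := P) (hRpdef ▸ hRpne)
    have h2 : pr2 x₀ = false := by rw [hx0]; exact this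
    simpa [pr2] using h2
  set P1 := C ++ [x₀] with hP1
  have hP1pre : P1 <+: P := by
    refine ⟨Rp.tail, ?_⟩
    rw [hP1, List.append_assoc]
    rw [← hPCD]
    congr 1
    rw [List.singleton_append]
    exact List.cons_head_tail hRpne
  have hP1ne : P1 ≠ [] := by simp [hP1]
  have hP1head : P1.head? = some (u, α) := by
    obtain ⟨t, ht⟩ := hP1pre
    rw [← ht, List.head?_append] at hPhead
    cases h : P1.head? with
    | none => exact absurd (List.head?_eq_none_iff.mp h) hP1ne
    | some a =>
      rw [h] at hPhead
      simpa using hPhead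
  have hP1last : P1.getLast? = some x₀ := by
    rw [hP1]; exact List.getLast?_concat
  -- the flip map
  set fl : Side V → Side V := fun x => (x.1, !x.2) with hfl
  set L : List (Side V) := (P1.map fl).reverse ++ A with hL
  have hrevne : (P1.map fl).reverse ≠ [] := by
    simp [hP1ne]
  refine ⟨L, ?_, ?_, ?_, fl x₀, ((u, !α) :: A).getLast (List.cons_ne_nil _ _), ?_, ?_, ?_⟩
  · -- L ≠ []
    intro h
    rw [hL] at h
    exact hrevne (List.append_eq_nil_iff.mp h).1
  · -- Nodup of vertices
    have hmapfst : L.map Prod.fst = (P1.map Prod.fst).reverse ++ A.map Prod.fst := by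
      rw [hL, List.map_append, List.map_reverse, List.map_map]
      rfl
    rw [hmapfst, List.nodup_append']
    refine ⟨List.nodup_reverse.mpr ?_, ?_, ?_⟩
    · exact List.Nodup.sublist (hP1pre.map Prod.fst).sublist hPnodup
    · have hQtsub : List.Sublist (A.map Prod.fst) (Qt.map Prod.fst) :=
        ((List.takeWhile_prefix pr).map Prod.fst).sublist
      have : (Qt.map Prod.fst).Nodup := by
        have := hQnodup
        simp only [List.map_cons, List.nodup_cons] at this
        exact this.2
      exact List.Nodup.sublist hQtsub this
    · intro a ha hb
      rw [List.mem_reverse] at ha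
      have ha' : a ∈ S := (hP1pre.map Prod.fst).sublist.subset ha
      obtain ⟨x, hxA, rfl⟩ := List.mem_map.mp hb
      exact hAmem x hxA ha'
  · -- Chain'
    unfold List.Chain' at hPchain hQchain ⊢
    rw [hL, List.isChain_append]
    refine ⟨?_, ?_, ?_⟩
    · rw [List.isChain_reverse, List.isChain_map]
      have hP1chain : List.IsChain (BStep G) P1 := hPchain.prefix hP1pre
      refine hP1chain.imp ?_
      intro a b hab
      show BStep G (fl b) (fl a)
      unfold BStep at hab ⊢
      simp only [hfl, Bool.not_not]
      rw [Sym2.eq_swap]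
      exact hab
    · exact List.IsChain.prefix hQchain.tail (List.takeWhile_prefix pr)
    · intro x hx y hy
      have hx' : x = fl (u, α) := by
        rw [List.getLast?_reverse, List.head?_map, hP1head] at hx
        have hx'' : fl (u, α) = x := by simpa using hx
        exact hx''.symm
      cases hcc : A with
      | nil => rw [hcc] at hy; simp at hy
      | cons a t =>
        rw [hcc] at hy
        rw [List.head?_cons] at hy
        obtain rfl : a = y := Option.mem_some_iff.mp hy
        -- Qt = a :: _, first step of Q gives BStep (u,!α) a
        have hQt' : ∃ t', Qt = a :: t' := by
          have : A ++ R = Qt := hQtAR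
          rw [hcc] at this
          exact ⟨t ++ R, by rw [← this]; simp⟩
        obtain ⟨t', ht'⟩ := hQt'
        rw [ht'] at hQchain
        have := (List.isChain_cons_cons.mp hQchain).1
        rw [hx']
        simpa [hfl] using this
  · -- head?
    rw [hL, List.head?_append]
    have : (P1.map fl).reverse.head? = some (fl x₀) := by
      rw [List.head?_reverse, List.getLast?_map, hP1last]
      rfl
    rw [this]
    rfl
  · -- getLast?
    cases hcc : A with
    | nil =>
      rw [hL, hcc, List.append_nil, List.getLast?_reverse, List.head?_map, hP1head]
      simp [hfl]
    | cons a t =>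
      rw [hL, hcc, List.getLast?_append]
      have h1 : (a :: t).getLast? = some ((a :: t).getLast (List.cons_ne_nil _ _)) :=
        List.getLast?_eq_getLast _
      rw [h1]
      simp only [Option.some_or]
      congr 1
  · -- closing edge
    have hQsplit : (u, !α) :: Qt = (((u, !α) :: A) ++ (w :: R.tail)) := by
      rw [List.cons_append]
      congr 1
      rw [← hQtAR]
      congr 1
      simp [hw]
    rw [hQsplit] at hQchain
    have hstep := (List.isChain_append.mp hQchain).2.2
    have hy : BStep G (((u, !α) :: A).getLast (List.cons_ne_nil _ _)) w := by
      refine hstep _ ?_ w ?_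
      · exact List.getLast?_eq_getLast _
      · rfl
    unfold BStep at hy
    -- hy : s(lastSide, (w.1, !w.2)) ∈ G.E ; x = fl x₀ = (x₀.1, !x₀.2), x₀.1 = w.1
    by_cases hsg : w.2 = x₀.2
    · -- !w.2 = !x₀.2 = (fl x₀).2 : non-alternating closure s(y, x)
      right
      have he : (w.1, !w.2) = fl x₀ := by
        show (w.1, !w.2) = (x₀.1, !x₀.2)
        rw [hx0w, hsg]
      rwa [he] at hy
    · -- !w.2 = x₀.2 = !(fl x₀).2 : alternating closure
      left
      have hb : (!w.2) = x₀.2 := by simp [Bool.eq_not_of_ne hsg]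
      have he : (w.1, !w.2) = ((fl x₀).1, !(fl x₀).2) := by
        show (w.1, !w.2) = (x₀.1, !(!x₀.2))
        rw [hx0w, Bool.not_not]
        exact congrArg (Prod.mk w.1) hb
      rwa [he] at hy

end Paper
end

section
/- Let G be a bidirected graph having at least two vertices. If G has at most one tip, then G contains a cycloid. -/
/-!
Bidirected graphs.  A vertex-side is a vertex with a sign (`true` = `+`, `false` = `−`);
a bidirected edge is an unordered pair of vertex-sides (an element of `Sym2 (V × Bool)`).
-/

namespace Paper

variable {V : Type}

lemma hasSide_mem_verts (G : BDGraph V) {v : V} {α : Bool} (h : G.HasSide v α) :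
    v ∈ G.verts := by
  obtain ⟨e, he, hv⟩ := h
  exact G.wf e he _ hv

lemma not_tip_hasSide (G : BDGraph V) {w : V} (h : ¬ G.IsTip w) (δ : Bool) :
    G.HasSide w δ := by
  simp only [BDGraph.IsTip, not_forall] at h
  obtain ⟨e, he, f, hf, σ, hσ, hσ', -⟩ := h
  cases σ <;> cases δ
  · exact ⟨e, he, hσ⟩
  · exact ⟨f, hf, hσ'⟩
  · exact ⟨f, hf, hσ'⟩
  · exact ⟨e, he, hσ⟩

lemma extend_lemma (G : BDGraph V) (hfin : G.verts.Finite) (v₁ : V)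
    (hgood : ∀ w, w ≠ v₁ → ∀ δ : Bool, G.HasSide w δ → G.HasSide w (!δ)) :
    ∀ n (p : List (Side V)) (v : V) (α : Bool),
      p.getLast? = some (v, α) → G.HasSide v α →
      p.Chain' (BStep G) → (p.map Prod.fst).Nodup →
      (∀ x ∈ p, Prod.fst x ∈ G.verts) → v₁ ∈ p.map Prod.fst →
      hfin.toFinset.card + 1 ≤ p.length + n →
      HasCycloid G := by
  classical
  intro n
  induction n with
  | zero =>
    intro p v α hlast _ _ hnodup hverts _ hcard
    exfalso
    have hsub : (p.map Prod.fst).toFinset ⊆ hfin.toFinset := by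
      intro x hx
      rw [List.mem_toFinset, List.mem_map] at hx
      obtain ⟨y, hy, rfl⟩ := hx
      rw [Set.Finite.mem_toFinset]
      exact hverts y hy
    have := Finset.card_le_card hsub
    rw [List.toFinset_card_of_nodup hnodup, List.length_map] at this
    omega
  | succ n ih =>
    intro p v α hlast hside hchain hnodup hverts hv1 hcard
    obtain ⟨e, he, hmem⟩ := hside
    obtain ⟨z, rfl⟩ := Sym2.mem_iff_exists.1 hmem
    obtain ⟨w, δ⟩ := z
    by_cases hw : w ∈ p.map Prod.fst
    · -- close up into a cycloid
      obtain ⟨x, hxmem, hx⟩ := List.mem_map.1 hw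
      obtain ⟨r, q, rfl⟩ := List.append_of_mem hxmem
      refine ⟨x :: q, by simp, ?_, ?_, x, (v, α), rfl, ?_, ?_⟩
      · rw [List.map_append] at hnodup
        exact hnodup.of_append_right
      · exact hchain.suffix ⟨r, rfl⟩
      · rw [List.getLast?_append] at hlast
        simpa using hlast
      · obtain ⟨w', β⟩ := x
        obtain rfl : w' = w := hx
        by_cases hδ : δ = β
        · subst hδ
          exact Or.inr he
        · left
          have : δ = !β := by
            cases δ <;> cases β <;> simp_all
          rw [← this]
          exact he
    · -- extend the path by one edge
      have hwδ : G.HasSide w δ := ⟨_, he, Sym2.mem_mk_right _ _⟩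
      have hwne : w ≠ v₁ := fun h => hw (h ▸ hv1)
      have hside' : G.HasSide w (!δ) := hgood w hwne δ hwδ
      have hpne : p ≠ [] := by
        rintro rfl; simp at hlast
      have hvmem : (v, α) ∈ p := by
        have := List.getLast?_eq_getLast (l := p) hpne
        rw [hlast] at this
        rw [show (v, α) = p.getLast hpne from by injection this]
        exact List.getLast_mem hpne
      apply ih (p ++ [(w, !δ)]) w (!δ)
      · exact List.getLast?_concat (l := p)
      · exact hside'
      · show List.IsChain (BStep G) (p ++ [(w, !δ)])
        rw [List.isChain_append]
        refine ⟨hchain, List.isChain_singleton _, ?_⟩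
        intro a ha b hb
        rw [hlast, Option.mem_def, Option.some.injEq] at ha
        simp only [List.head?_cons, Option.mem_def, Option.some.injEq] at hb
        subst ha; subst hb
        show s((v, α), (w, !!δ)) ∈ G.E
        rwa [Bool.not_not]
      · rw [List.map_append]
        simp only [List.map_cons, List.map_nil]
        rw [List.nodup_append]
        exact ⟨hnodup, List.nodup_singleton _, fun a ha b hb => by rw [List.mem_singleton] at hb; subst hb; exact fun h => hw (h ▸ ha)⟩
      · intro x hx
        rw [List.mem_append] at hx
        rcases hx with hx | hx
        · exact hverts x hx
        · simp only [List.mem_singleton] at hx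
          subst hx
          exact hasSide_mem_verts G hwδ
      · rw [List.map_append, List.mem_append]
        exact Or.inl hv1
      · rw [List.length_append, List.length_singleton]
        omega

lemma start_lemma (G : BDGraph V)
    (htwo : ∃ a ∈ G.verts, ∃ b ∈ G.verts, a ≠ b)
    (htip : ∀ a ∈ G.verts, ∀ b ∈ G.verts, G.IsTip a → G.IsTip b → a = b) :
    ∃ v₁ α₁, G.HasSide v₁ α₁ ∧
      ∀ w, w ≠ v₁ → ∀ δ : Bool, G.HasSide w δ → G.HasSide w (!δ) := by
  classical
  obtain ⟨a, ha, b, hb, hab⟩ := htwo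
  by_cases ht : ∃ t ∈ G.verts, G.IsTip t
  · obtain ⟨t, htv, htt⟩ := ht
    by_cases hts : ∃ α, G.HasSide t α
    · obtain ⟨α, hα⟩ := hts
      refine ⟨t, α, hα, ?_⟩
      intro w hwne δ hwδ
      by_cases hwt : G.IsTip w
      · exact absurd (htip w (hasSide_mem_verts G hwδ) t htv hwt htt) hwne
      · exact not_tip_hasSide G hwt _
    · -- the tip t has no side; pick another starting vertex
      set c : V := if a = t then b else a with hc
      have hct : c ≠ t := by
        rw [hc]; split
        · rename_i h; rw [← h]; exact fun hh => hab hh.symm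
        · assumption
      have hcv : c ∈ G.verts := by
        rw [hc]; split <;> assumption
      have hcnt : ¬ G.IsTip c := fun h => hct (htip c hcv t htv h htt)
      refine ⟨c, true, not_tip_hasSide G hcnt true, ?_⟩
      intro w _ δ hwδ
      by_cases hwt : G.IsTip w
      · have : w = t := htip w (hasSide_mem_verts G hwδ) t htv hwt htt
        exact absurd ⟨δ, this ▸ hwδ⟩ hts
      · exact not_tip_hasSide G hwt _
  · push_neg at ht
    refine ⟨a, true, not_tip_hasSide G (ht a ha) true, ?_⟩
    intro w _ δ hwδ
    exact not_tip_hasSide G (ht w (hasSide_mem_verts G hwδ)) _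

/-- A (finite) bidirected graph with at least two vertices and at
most one tip contains a cycloid.  (A vertex incident to no edge counts as a tip.) -/
theorem statement_16 (G : BDGraph V) (hfin : G.verts.Finite)
    (htwo : ∃ a ∈ G.verts, ∃ b ∈ G.verts, a ≠ b)
    (htip : ∀ a ∈ G.verts, ∀ b ∈ G.verts, G.IsTip a → G.IsTip b → a = b) :
    HasCycloid G := by
  obtain ⟨v₁, α₁, hside, hgood⟩ := start_lemma G htwo htip
  apply extend_lemma G hfin v₁ hgood hfin.toFinset.card [(v₁, α₁)] v₁ α₁
  · rfl
  · exact hside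
  · exact List.isChain_singleton _
  · simp
  · intro x hx
    simp only [List.mem_singleton] at hx
    subst hx
    exact hasSide_mem_verts G hside
  · simp
  · simp [Nat.add_comm]

end Paper
end
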